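/- arXiv:1510.00811 — 3 statements merged into one kernel-verified Lean document; each statement's English description precedes it below -/
import Mathlib

section
/- For every graph G with maximum degree Δ ≥ 1 and matching number ν ≥ 1, the number of edges of G satisfies e(G) ≤ νΔ + ⌊Δ/2⌋·⌊ν/⌈Δ/2⌉⌋. -/
open SimpleGraph

/-- The matching number of a graph: the maximum number of edges in a matching. -/
noncomputable def matchingNumber {V : Type*} (G : SimpleGraph V) : ℕ :=
  sSup {m | ∃ M : G.Subgraph, M.IsMatching ∧ M.edgeSet.ncard = m}

section AuxiliaryMatchingTheory

open Finset Function

set_option linter.unusedSectionVars false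
set_option linter.unusedVariables false
set_option maxHeartbeats 1600000

variable {V : Type*} [Fintype V] [DecidableEq V]

def IsMF (G : SimpleGraph V) (f : V → V) : Prop :=
  Function.Involutive f ∧ ∀ v, f v ≠ v → G.Adj v (f v)

def msupp (f : V → V) [DecidableEq V] : Finset V :=
  Finset.univ.filter (fun v => f v ≠ v)

lemma mem_msupp {f : V → V} {v : V} : v ∈ msupp f ↔ f v ≠ v := by
  simp [msupp]

lemma isMF_id (G : SimpleGraph V) : IsMF G id :=
  ⟨fun _ => rfl, fun v hv => absurd rfl hv⟩

lemma pairing_card {f : V → V} (hf : Function.Involutive f) :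
    ∀ (s : Finset V), (∀ a ∈ s, f a ∈ s) → (∀ a ∈ s, f a ≠ a) →
      s.card = 2 * (s.image (fun a => s(a, f a))).card := by
  intro s
  induction s using Finset.strongInduction with
  | _ s ih =>
    intro hcl hnf
    rcases s.eq_empty_or_nonempty with rfl | ⟨a, ha⟩
    · simp
    · have hfa : f a ∈ s := hcl a ha
      have hne : f a ≠ a := hnf a ha
      set s' := (s.erase a).erase (f a) with hs'
      have hss : s' ⊂ s := by
        apply Finset.ssubset_of_subset_of_ssubset
        · exact Finset.erase_subset _ _
        · exact Finset.erase_ssubset ha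
      have hmem : ∀ b, b ∈ s' ↔ b ∈ s ∧ b ≠ a ∧ b ≠ f a := by
        intro b; simp [hs', and_comm, and_assoc]; tauto
      have hcl' : ∀ b ∈ s', f b ∈ s' := by
        intro b hb
        rw [hmem] at hb ⊢
        refine ⟨hcl b hb.1, ?_, ?_⟩
        · intro h; apply hb.2.2; rw [← h]; exact (hf b).symm
        · intro h; apply hb.2.1; have := congrArg f h; rwa [hf, hf] at this
      have hnf' : ∀ b ∈ s', f b ≠ b := fun b hb => hnf b ((hmem b).mp hb).1
      have hcard : s.card = s'.card + 2 := by
        rw [hs']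
        rw [Finset.card_erase_of_mem, Finset.card_erase_of_mem ha]
        · have h2 : 2 ≤ s.card := by
            have hsub : ({a, f a} : Finset V) ⊆ s := by
              intro x hx; simp at hx; rcases hx with rfl | rfl <;> assumption
            have := Finset.card_le_card hsub
            rwa [Finset.card_pair (Ne.symm hne)] at this
          omega
        · exact Finset.mem_erase.mpr ⟨hne, hfa⟩
      have himage : s.image (fun a => s(a, f a)) =
          insert s(a, f a) (s'.image (fun a => s(a, f a))) := by
        ext e
        simp only [Finset.mem_image, Finset.mem_insert]
        constructor
        · rintro ⟨b, hb, rfl⟩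
          by_cases hba : b = a
          · subst hba; left; rfl
          by_cases hbfa : b = f a
          · subst hbfa; left; rw [hf]; exact Sym2.eq_swap
          · right; exact ⟨b, (hmem b).mpr ⟨hb, hba, hbfa⟩, rfl⟩
        · rintro (rfl | ⟨b, hb, rfl⟩)
          · exact ⟨a, ha, rfl⟩
          · exact ⟨b, ((hmem b).mp hb).1, rfl⟩
      have hnotmem : s(a, f a) ∉ s'.image (fun a => s(a, f a)) := by
        intro hmem2
        simp only [Finset.mem_image] at hmem2
        obtain ⟨b, hb, hbe⟩ := hmem2
        rw [Sym2.eq_iff] at hbe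
        rcases (hmem b).mp hb with ⟨_, hba, hbfa⟩
        rcases hbe with ⟨h1, _⟩ | ⟨h1, h2⟩
        · exact hba h1
        · exact hbfa h1
      rw [hcard, himage, Finset.card_insert_of_notMem hnotmem,
        ih s' hss hcl' hnf']
      ring

noncomputable def maxc (G : SimpleGraph V) [DecidableEq V] : ℕ :=
  sSup {n | ∃ f, IsMF G f ∧ (msupp f).card = n}

lemma maxc_bddAbove (G : SimpleGraph V) :
    BddAbove {n | ∃ f, IsMF G f ∧ (msupp f).card = n} := by
  refine ⟨Fintype.card V, ?_⟩
  rintro n ⟨f, hf, rfl⟩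
  exact Finset.card_le_card (Finset.subset_univ _) |>.trans (le_of_eq (Finset.card_univ))

lemma exists_maxMF (G : SimpleGraph V) :
    ∃ f, IsMF G f ∧ (msupp f).card = maxc G ∧
      ∀ g, IsMF G g → (msupp g).card ≤ maxc G := by
  have hne : {n | ∃ f, IsMF G f ∧ (msupp f).card = n}.Nonempty :=
    ⟨(msupp (id : V → V)).card, id, isMF_id G, rfl⟩
  have hmem := Nat.sSup_mem hne (maxc_bddAbove G)
  obtain ⟨f, hf, hcard⟩ := hmem
  exact ⟨f, hf, hcard, fun g hg => le_csSup (maxc_bddAbove G) ⟨g, hg, rfl⟩⟩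

lemma le_maxc {G : SimpleGraph V} {g : V → V} (hg : IsMF G g) :
    (msupp g).card ≤ maxc G :=
  le_csSup (maxc_bddAbove G) ⟨g, hg, rfl⟩

lemma no_adj_exposed {G : SimpleGraph V} {f : V → V} (hf : IsMF G f)
    (hfmax : ∀ g, IsMF G g → (msupp g).card ≤ (msupp f).card)
    {u v : V} (huv : G.Adj u v) (hu : f u = u) (hv : f v = v) : False := by
  have hne : u ≠ v := huv.ne
  set g : V → V := fun z => if z = u then v else if z = v then u else f z with hg
  have hgu : g u = v := by simp [hg]
  have hgv : g v = u := by simp [hg, hne.symm]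
  have hgz : ∀ z, z ≠ u → z ≠ v → g z = f z := by
    intro z h1 h2; simp [hg, h1, h2]
  have hginv : Function.Involutive g := by
    intro z
    by_cases hzu : z = u
    · subst hzu; rw [hgu, hgv]
    by_cases hzv : z = v
    · subst hzv; rw [hgv, hgu]
    · have h1 : f z ≠ u := by
        intro h; apply hzu; rw [← hf.1 z, h]; exact hu
      have h2 : f z ≠ v := by
        intro h; apply hzv; rw [← hf.1 z, h]; exact hv
      rw [hgz z hzu hzv, hgz _ h1 h2, hf.1 z]
  have hgmf : IsMF G g := by
    refine ⟨hginv, fun z hz => ?_⟩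
    by_cases hzu : z = u
    · subst hzu; rw [hgu]; exact huv
    by_cases hzv : z = v
    · subst hzv; rw [hgv]; exact huv.symm
    · rw [hgz z hzu hzv] at hz ⊢; exact hf.2 z hz
  have hu' : u ∉ msupp f := by rw [mem_msupp]; simpa using hu
  have hv' : v ∉ msupp f := by rw [mem_msupp]; simpa using hv
  have hsupp : msupp g = insert u (insert v (msupp f)) := by
    ext z
    simp only [mem_msupp, Finset.mem_insert]
    by_cases hzu : z = u
    · subst hzu; rw [hgu]; simp [hne, hne.symm]
    by_cases hzv : z = v
    · subst hzv; rw [hgv]; simp [hne, hne.symm]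
    · rw [hgz z hzu hzv]; simp [hzu, hzv, mem_msupp]
  have hcard : (msupp g).card = (msupp f).card + 2 := by
    have h2 : u ∉ insert v (msupp f) := by
      simp only [Finset.mem_insert]; push_neg; exact ⟨hne, hu'⟩
    rw [hsupp, Finset.card_insert_of_notMem h2, Finset.card_insert_of_notMem hv']
  have := hfmax g hgmf
  omega

lemma glue_mf {G : SimpleGraph V} {f g : V → V} (hf : IsMF G f) (hg : IsMF G g)
    (O : Finset V) (hOf : ∀ w ∈ O, f w ∈ O) (hOg : ∀ w ∈ O, g w ∈ O) :
    IsMF G (fun v => if v ∈ O then g v else f v) ∧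
      msupp (fun v => if v ∈ O then g v else f v) = ((msupp g) ∩ O) ∪ ((msupp f) \ O) := by
  have hOf' : ∀ w, w ∉ O → f w ∉ O := by
    intro w hw hfw
    exact hw (by simpa [hf.1 w] using hOf _ hfw)
  have heval : ∀ v, (fun v => if v ∈ O then g v else f v) v = if v ∈ O then g v else f v :=
    fun v => rfl
  constructor
  · constructor
    · intro v
      by_cases hv : v ∈ O
      · simp only [heval, if_pos hv, if_pos (hOg v hv)]
        exact hg.1 v
      · simp only [heval, if_neg hv, if_neg (hOf' v hv)]
        exact hf.1 v
    · intro v hv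
      rw [heval] at hv ⊢
      by_cases hvO : v ∈ O
      · rw [if_pos hvO] at hv ⊢; exact hg.2 v hv
      · rw [if_neg hvO] at hv ⊢; exact hf.2 v hv
  · ext z
    simp only [mem_msupp, Finset.mem_union, Finset.mem_inter, Finset.mem_sdiff, mem_msupp]
    by_cases hz : z ∈ O
    · simp [hz]
    · simp [hz]

lemma flip_mf {G : SimpleGraph V} {f g : V → V} (hf : IsMF G f)
    (hfmax : ∀ h, IsMF G h → (msupp h).card ≤ (msupp f).card)
    (hg : IsMF G g) {u : V} (hu : f u = u) (hgu : g u ≠ u) :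
    ∃ (x : V) (f' g' : V → V), IsMF G f' ∧ IsMF G g' ∧
      (msupp f').card = (msupp f).card ∧ (msupp g').card = (msupp g).card ∧
      x ≠ u ∧ g x = x ∧ f' x = x ∧
      (∀ v, f v = v → v ≠ u → f' v = v) ∧
      g' u = u ∧ (∀ w, g w = w → w ≠ x → g' w = w) := by
  classical
  set σ : V → V := fun v => f (g v) with hσ
  have σinj : Function.Injective σ := hf.1.injective.comp hg.1.injective
  -- u is a periodic point
  have hper : u ∈ Function.periodicPts σ := by
    obtain ⟨i, j, hij, hsame⟩ := Finite.exists_ne_map_eq_of_infinite (fun n : ℕ => σ^[n] u)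
    rcases hij.lt_or_gt with h | h
    · have : σ^[i] (σ^[j - i] u) = σ^[i] u := by
        rw [← Function.iterate_add_apply]
        simpa [Nat.add_sub_cancel' h.le] using hsame.symm
      have h2 : σ^[j - i] u = u := σinj.iterate i this
      exact Function.mk_mem_periodicPts (by omega) h2
    · have : σ^[j] (σ^[i - j] u) = σ^[j] u := by
        rw [← Function.iterate_add_apply]
        simpa [Nat.add_sub_cancel' h.le] using hsame
      have h2 : σ^[i - j] u = u := σinj.iterate j this
      exact Function.mk_mem_periodicPts (by omega) h2
  set r := Function.minimalPeriod σ u with hrdef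
  have hr0 : 0 < r := Function.minimalPeriod_pos_of_mem_periodicPts hper
  have hrr : σ^[r] u = u := Function.iterate_minimalPeriod
  set z : ℕ → V := fun k => σ^[k] u with hz
  have zinj : ∀ i, i < r → ∀ j, j < r → z i = z j → i = j := by
    intro i hi j hj hij
    exact Function.iterate_injOn_Iio_minimalPeriod (Set.mem_Iio.mpr hi) (Set.mem_Iio.mpr hj) hij
  have step1 : ∀ w, σ (f (σ w)) = f w := by
    intro w
    show f (g (f (f (g w)))) = f w
    rw [hf.1, hg.1]
  have conj : ∀ k v, σ^[k] (f (σ^[k] v)) = f v := by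
    intro k
    induction k with
    | zero => intro v; simp
    | succ n ih =>
      intro v
      have e1 : σ^[n + 1] v = σ (σ^[n] v) := Function.iterate_succ_apply' σ n v
      have e2 : σ^[n + 1] (f (σ (σ^[n] v))) = σ^[n] (σ (f (σ (σ^[n] v)))) :=
        Function.iterate_succ_apply σ n _
      rw [e1, e2, step1]
      exact ih v
  have fz : ∀ k, k ≤ r → f (z k) = z (r - k) := by
    intro k hk
    have h1 : σ^[k] (f (z k)) = u := by
      have := conj k u
      rwa [hu] at this
    have h2 : σ^[k] (z (r - k)) = u := by
      show σ^[k] (σ^[r - k] u) = u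
      rw [← Function.iterate_add_apply]
      rw [Nat.add_sub_cancel' hk]
      exact hrr
    exact σinj.iterate k (h1.trans h2.symm)
  have gz : ∀ k, k < r → g (z k) = z (r - 1 - k) := by
    intro k hk
    have h1 : g (z k) = f (z (k + 1)) := by
      have : z (k + 1) = σ (z k) := Function.iterate_succ_apply' σ k u
      rw [this]
      show g (z k) = f (f (g (z k)))
      rw [hf.1]
    rw [h1, fz (k + 1) (by omega)]
    congr 1
    omega
  have hr1 : r ≠ 1 := by
    intro h1
    apply hgu
    have hσu : σ u = u := by
      have h2 := hrr
      rw [h1] at h2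
      simpa using h2
    have h3 : g u = f (f (g u)) := (hf.1 _).symm
    rw [h3]
    show f (σ u) = u
    rw [hσu, hu]
  have hr2 : 2 ≤ r := by omega
  set O : Finset V := (Finset.range r).image z with hO
  have memO : ∀ w, w ∈ O ↔ ∃ k, k < r ∧ z k = w := by
    intro w; simp [hO, Finset.mem_image, Finset.mem_range]
  have hOu : u ∈ O := (memO u).mpr ⟨0, hr0, rfl⟩
  have hOf : ∀ w ∈ O, f w ∈ O := by
    intro w hw
    obtain ⟨k, hk, rfl⟩ := (memO w).mp hw
    rcases Nat.eq_zero_or_pos k with rfl | hkpos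
    · show f (z 0) ∈ O
      have : f (z 0) = u := hu
      rw [this]; exact hOu
    · rw [fz k hk.le]
      exact (memO _).mpr ⟨r - k, by omega, rfl⟩
  have hOg : ∀ w ∈ O, g w ∈ O := by
    intro w hw
    obtain ⟨k, hk, rfl⟩ := (memO w).mp hw
    rw [gz k hk]
    exact (memO _).mpr ⟨r - 1 - k, by omega, rfl⟩
  have cardO : O.card = r := by
    rw [hO, Finset.card_image_of_injOn, Finset.card_range]
    intro i hi j hj
    exact zinj i (Finset.mem_range.mp hi) j (Finset.mem_range.mp hj)
  -- fixed point characterisations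
  have ffix : ∀ k, k < r → (f (z k) = z k ↔ (k = 0 ∨ 2 * k = r)) := by
    intro k hk
    constructor
    · intro h
      rcases Nat.eq_zero_or_pos k with rfl | hkpos
      · left; rfl
      · right
        rw [fz k hk.le] at h
        have := zinj (r - k) (by omega) k hk h
        omega
    · rintro (rfl | h2)
      · exact hu
      · rw [fz k hk.le]
        congr 1; omega
  have gfix : ∀ k, k < r → (g (z k) = z k ↔ 2 * k + 1 = r) := by
    intro k hk
    rw [gz k hk]
    constructor
    · intro h
      have := zinj (r - 1 - k) (by omega) k hk h
      omega
    · intro h; congr 1; omega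
  -- fixed sets inside O
  set Ff : Finset V := O.filter (fun w => f w = w) with hFf
  set Fg : Finset V := O.filter (fun w => g w = w) with hFg
  have hmsf : msupp f ∩ O = O \ Ff := by
    ext w
    simp only [Finset.mem_inter, mem_msupp, Finset.mem_sdiff, hFf, Finset.mem_filter]
    tauto
  have hmsg : msupp g ∩ O = O \ Fg := by
    ext w
    simp only [Finset.mem_inter, mem_msupp, Finset.mem_sdiff, hFg, Finset.mem_filter]
    tauto
  have hFfsub : Ff ⊆ O := Finset.filter_subset _ _
  have hFgsub : Fg ⊆ O := Finset.filter_subset _ _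
  have cardmsf : (msupp f ∩ O).card = r - Ff.card := by
    rw [hmsf, Finset.card_sdiff_of_subset hFfsub, cardO]
  have cardmsg : (msupp g ∩ O).card = r - Fg.card := by
    rw [hmsg, Finset.card_sdiff_of_subset hFgsub, cardO]
  rcases Nat.even_or_odd r with ⟨t, ht⟩ | ⟨t, ht⟩
  · -- r even : contradiction with maximality of f
    exfalso
    have ht1 : 1 ≤ t := by omega
    have hzt : z t ∈ O := (memO _).mpr ⟨t, by omega, rfl⟩
    have hFfeq : Ff = {z 0, z t} := by
      ext w
      simp only [hFf, Finset.mem_filter, Finset.mem_insert, Finset.mem_singleton]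
      constructor
      · rintro ⟨hwO, hwfix⟩
        obtain ⟨k, hk, rfl⟩ := (memO w).mp hwO
        rcases (ffix k hk).mp hwfix with rfl | h2
        · left; rfl
        · right; congr 1; omega
      · rintro (rfl | rfl)
        · exact ⟨hOu, hu⟩
        · exact ⟨hzt, (ffix t (by omega)).mpr (Or.inr (by omega))⟩
    have hFgeq : Fg = ∅ := by
      rw [Finset.eq_empty_iff_forall_notMem]
      intro w hw
      simp only [hFg, Finset.mem_filter] at hw
      obtain ⟨k, hk, rfl⟩ := (memO w).mp hw.1
      have := (gfix k hk).mp hw.2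
      omega
    have hcardFf : Ff.card = 2 := by
      rw [hFfeq]
      rw [Finset.card_insert_of_notMem, Finset.card_singleton]
      simp only [Finset.mem_singleton]
      intro h
      have := zinj 0 hr0 t (by omega) h
      omega
    obtain ⟨hmf, hsupp⟩ := glue_mf hf hg O hOf hOg
    have hcardh : (msupp fun v => if v ∈ O then g v else f v).card =
        (msupp g ∩ O).card + (msupp f \ O).card := by
      rw [hsupp]
      apply Finset.card_union_of_disjoint
      refine Finset.disjoint_left.mpr ?_
      intro a ha hb
      exact (Finset.mem_sdiff.mp hb).2 (Finset.mem_inter.mp ha).2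
    have hsd : (msupp f \ O).card + (msupp f ∩ O).card = (msupp f).card :=
      Finset.card_sdiff_add_card_inter _ _
    have h1 := hfmax _ hmf
    rw [hcardh] at h1
    rw [cardmsg, hFgeq] at h1
    simp only [Finset.card_empty] at h1
    rw [cardmsf, hcardFf] at hsd
    omega
  · -- r odd
    have ht1 : 1 ≤ t := by omega
    have hzt : z t ∈ O := (memO _).mpr ⟨t, by omega, rfl⟩
    have hgzt : g (z t) = z t := (gfix t (by omega)).mpr (by omega)
    have hFfeq : Ff = {z 0} := by
      ext w
      simp only [hFf, Finset.mem_filter, Finset.mem_singleton]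
      constructor
      · rintro ⟨hwO, hwfix⟩
        obtain ⟨k, hk, rfl⟩ := (memO w).mp hwO
        rcases (ffix k hk).mp hwfix with rfl | h2
        · rfl
        · exfalso; omega
      · rintro rfl
        exact ⟨hOu, hu⟩
    have hFgeq : Fg = {z t} := by
      ext w
      simp only [hFg, Finset.mem_filter, Finset.mem_singleton]
      constructor
      · rintro ⟨hwO, hwfix⟩
        obtain ⟨k, hk, rfl⟩ := (memO w).mp hwO
        have := (gfix k hk).mp hwfix
        congr 1; omega
      · rintro rfl
        exact ⟨hzt, hgzt⟩
    have hxu : z t ≠ z 0 := by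
      intro h
      have := zinj t (by omega) 0 hr0 h
      omega
    obtain ⟨hmf1, hsupp1⟩ := glue_mf hf hg O hOf hOg
    obtain ⟨hmf2, hsupp2⟩ := glue_mf hg hf O hOg hOf
    have hdisj : ∀ (s1 s2 : Finset V), Disjoint (s1 ∩ O) (s2 \ O) := by
      intro s1 s2
      refine Finset.disjoint_left.mpr ?_
      intro a ha hb
      exact (Finset.mem_sdiff.mp hb).2 (Finset.mem_inter.mp ha).2
    have hcard1 : (msupp fun v => if v ∈ O then g v else f v).card = (msupp f).card := by
      rw [hsupp1, Finset.card_union_of_disjoint (hdisj _ _)]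
      have hsd := Finset.card_sdiff_add_card_inter (msupp f) O
      rw [cardmsg, hFgeq, Finset.card_singleton]
      rw [cardmsf, hFfeq, Finset.card_singleton] at hsd
      omega
    have hcard2 : (msupp fun v => if v ∈ O then f v else g v).card = (msupp g).card := by
      rw [hsupp2, Finset.card_union_of_disjoint (hdisj _ _)]
      have hsd := Finset.card_sdiff_add_card_inter (msupp g) O
      rw [cardmsf, hFfeq, Finset.card_singleton]
      rw [cardmsg, hFgeq, Finset.card_singleton] at hsd
      omega
    refine ⟨z t, (fun v => if v ∈ O then g v else f v),
      (fun v => if v ∈ O then f v else g v), hmf1, hmf2, hcard1, hcard2,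
      hxu, hgzt, ?_, ?_, ?_, ?_⟩
    · show (if z t ∈ O then g (z t) else f (z t)) = z t
      rw [if_pos hzt, hgzt]
    · intro v hv hvu
      have hvO : v ∉ O := by
        intro hvO
        have hvFf : v ∈ Ff := by
          rw [hFf, Finset.mem_filter]; exact ⟨hvO, hv⟩
        rw [hFfeq, Finset.mem_singleton] at hvFf
        exact hvu hvFf
      show (if v ∈ O then g v else f v) = v
      rw [if_neg hvO, hv]
    · show (if u ∈ O then f u else g u) = u
      rw [if_pos hOu, hu]
    · intro w hw hwx
      have hwO : w ∉ O := by
        intro hwO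
        have hwFg : w ∈ Fg := by
          rw [hFg, Finset.mem_filter]; exact ⟨hwO, hw⟩
        rw [hFgeq, Finset.mem_singleton] at hwFg
        exact hwx hwFg
      show (if w ∈ O then f w else g w) = w
      rw [if_neg hwO, hw]

lemma key_lemma {G : SimpleGraph V}
    (hin : ∀ w, ∃ f, IsMF G f ∧ (∀ g, IsMF G g → (msupp g).card ≤ (msupp f).card) ∧ f w = w) :
    ∀ (m : ℕ) (f : V → V), IsMF G f →
      (∀ g, IsMF G g → (msupp g).card ≤ (msupp f).card) →
      ∀ u v, f u = u → f v = v → u ≠ v → G.Reachable u v → G.dist u v ≤ m → False := by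
  intro m
  induction m with
  | zero =>
    intro f hf hfmax u v hu hv huv hreach hdist
    have h0 := Nat.le_zero.mp hdist
    rcases (dist_eq_zero_iff_eq_or_not_reachable).mp h0 with h | h
    exacts [huv h, h hreach]
  | succ m ih =>
    intro f hf hfmax u v hu hv huv hreach hdist
    rcases Nat.lt_or_ge (G.dist u v) (m + 1) with hlt | hge
    · exact ih f hf hfmax u v hu hv huv hreach (by omega)
    have hdist' : G.dist u v = m + 1 := le_antisymm hdist hge
    rcases Nat.eq_zero_or_pos m with rfl | hm
    · have hadj : G.Adj u v := dist_eq_one_iff_adj.mp hdist'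
      exact no_adj_exposed hf hfmax hadj hu hv
    · obtain ⟨p, hp⟩ := hreach.exists_walk_length_eq_dist
      cases p with
      | nil =>
        rw [hdist'] at hp
        simp at hp
      | @cons _ w _ hadj q =>
        have hqlen : q.length = m := by
          rw [hdist'] at hp
          simpa using hp
        have hqdist : G.dist w v ≤ m := hqlen ▸ dist_le q
        have hwreach : G.Reachable w v := ⟨q⟩
        have hwu : w ≠ u := hadj.ne.symm
        have hwv : w ≠ v := by
          rintro rfl
          have : G.dist u w = 1 := dist_eq_one_iff_adj.mpr hadj
          omega
        obtain ⟨g, hg, hgmax, hgw⟩ := hin w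
        by_cases hgu : g u = u
        · exact no_adj_exposed hg hgmax hadj hgu hgw
        by_cases hgv : g v = v
        · exact ih g hg hgmax w v hgw hgv hwv hwreach hqdist
        obtain ⟨x, f', g', hf', hg', hcf', hcg', hxu, hgx, hf'x, hf'keep, hg'u, hg'keep⟩ :=
          flip_mf hf hfmax hg hu hgu
        by_cases hwx : w = x
        · have hf'max : ∀ h, IsMF G h → (msupp h).card ≤ (msupp f').card :=
            fun h hh => hcf' ▸ hfmax h hh
          have hv' : f' v = v := hf'keep v hv (Ne.symm huv)
          exact ih f' hf' hf'max w v (by rw [hwx]; exact hf'x) hv' hwv hwreach hqdist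
        · have hg'w : g' w = w := hg'keep w hgw hwx
          have hg'max : ∀ h, IsMF G h → (msupp h).card ≤ (msupp g').card :=
            fun h hh => hcg' ▸ hgmax h hh
          exact no_adj_exposed hg' hg'max hadj hg'u hg'w

def compGraph (G : SimpleGraph V) (C : G.ConnectedComponent) : SimpleGraph V where
  Adj a b := G.Adj a b ∧ G.connectedComponentMk a = C ∧ G.connectedComponentMk b = C
  symm := ⟨fun a b h => ⟨h.1.symm, h.2.2, h.2.1⟩⟩
  loopless := ⟨fun a h => G.loopless.irrefl a h.1⟩

lemma terminal_bound (d : ℕ) (hd : 1 ≤ d) (G : SimpleGraph V)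
    [DecidableRel G.Adj]
    (hdeg : ∀ v, (G.neighborSet v).ncard ≤ d)
    {f : V → V} (hf : IsMF G f)
    (hfmax : ∀ g, IsMF G g → (msupp g).card ≤ (msupp f).card)
    (hin : ∀ w, ∃ h, IsMF G h ∧ (∀ g, IsMF G g → (msupp g).card ≤ (msupp h).card) ∧ h w = w) :
    G.edgeSet.ncard ≤ ((msupp f).card / 2) * d +
      (d / 2) * (((msupp f).card / 2) / ((d + 1) / 2)) := by
  classical
  set k := (d + 1) / 2 with hk
  have hkpos : 0 < k := by omega
  set κ : V → G.ConnectedComponent := G.connectedComponentMk with hκ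
  -- exposed vertices are pairwise unreachable
  have huniq : ∀ u v, f u = u → f v = v → κ u = κ v → u = v := by
    intro u v hu hv hcc
    by_contra hne
    exact key_lemma hin (G.dist u v) f hf hfmax u v hu hv hne
      (ConnectedComponent.exact hcc) le_rfl
  -- edge fibers
  set E : Finset (Sym2 V) := G.edgeFinset with hE
  set τ : Sym2 V → G.ConnectedComponent := fun e => κ e.out.1 with hτ
  have hτadj : ∀ a b, G.Adj a b → τ s(a, b) = κ a := by
    intro a b hab
    have hmem : (s(a, b) : Sym2 V).out.1 ∈ (s(a, b) : Sym2 V) := Sym2.out_fst_mem _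
    rw [Sym2.mem_iff] at hmem
    rcases hmem with h | h
    · rw [hτ]; simp only; rw [h]
    · rw [hτ]; simp only; rw [h]
      exact (ConnectedComponent.connectedComponentMk_eq_of_adj hab).symm
  set nC : G.ConnectedComponent → ℕ := fun C => (Finset.univ.filter (fun v => κ v = C)).card
  set sC : G.ConnectedComponent → Finset V := fun C => (msupp f).filter (fun v => κ v = C)
  set eC : G.ConnectedComponent → ℕ := fun C => (E.filter (fun e => τ e = C)).card
  -- total edge count
  have hesum : E.card = ∑ C, eC C :=
    Finset.card_eq_sum_card_fiberwise (fun e _ => Finset.mem_univ (τ e))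
  -- total support count
  have hssum : (msupp f).card = ∑ C, (sC C).card :=
    Finset.card_eq_sum_card_fiberwise (fun v _ => Finset.mem_univ (κ v))
  -- each sC is closed under f and fixed-point free
  have hclosed : ∀ C, ∀ a ∈ sC C, f a ∈ sC C := by
    intro C a ha
    simp only [sC, Finset.mem_filter, mem_msupp] at ha ⊢
    obtain ⟨hfa, hκa⟩ := ha
    have hadj : G.Adj a (f a) := hf.2 a hfa
    refine ⟨?_, ?_⟩
    · rw [hf.1 a]; exact Ne.symm hfa
    · rw [hκ] at hκa ⊢
      rw [← ConnectedComponent.connectedComponentMk_eq_of_adj hadj]; exact hκa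
  have hnofix : ∀ C, ∀ a ∈ sC C, f a ≠ a := by
    intro C a ha
    simp only [sC, Finset.mem_filter, mem_msupp] at ha
    exact ha.1
  set mC : G.ConnectedComponent → ℕ := fun C => (sC C).card / 2 with hmC
  have hceven : ∀ C, (sC C).card = 2 * mC C := by
    intro C
    have h2 := pairing_card hf.1 (sC C) (hclosed C) (hnofix C)
    simp only [hmC]
    omega
  -- at most one exposed vertex per component
  have hn_le : ∀ C, nC C ≤ (sC C).card + 1 := by
    intro C
    have hsplit := Finset.card_filter_add_card_filter_not
      (s := Finset.univ.filter (fun v => κ v = C)) (p := fun v => f v ≠ v)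
    have h1 : (Finset.univ.filter (fun v => κ v = C)).filter (fun v => f v ≠ v) = sC C := by
      ext a
      simp only [sC, Finset.mem_filter, Finset.mem_univ, true_and, mem_msupp, msupp]
      tauto
    have h2 : ((Finset.univ.filter (fun v => κ v = C)).filter (fun v => ¬ f v ≠ v)).card ≤ 1 := by
      apply Finset.card_le_one.mpr
      intro a ha b hb
      simp only [Finset.mem_filter, Finset.mem_univ, true_and, not_not] at ha hb
      exact huniq a b ha.2 hb.2 (ha.1.trans hb.1.symm)
    rw [h1] at hsplit
    show (Finset.univ.filter (fun v => κ v = C)).card ≤ (sC C).card + 1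
    omega
  -- per-component degree bounds via auxiliary graph
  have hkey2 : ∀ C, 2 * eC C ≤ nC C * d ∧ 2 * eC C ≤ nC C * (nC C - 1) := by
    intro C
    set GC : SimpleGraph V := compGraph G C with hGC
    haveI : DecidableRel GC.Adj := Classical.decRel _
    have hGCadj : ∀ a b, GC.Adj a b ↔ (G.Adj a b ∧ κ a = C ∧ κ b = C) := fun a b => Iff.rfl
    have hGCedge : GC.edgeFinset = E.filter (fun e => τ e = C) := by
      ext e
      induction e using Sym2.ind with
      | _ a b =>
        simp only [mem_edgeFinset, Finset.mem_filter, hE, mem_edgeSet, hGCadj]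
        constructor
        · rintro ⟨hab, h1, h2⟩
          refine ⟨hab, ?_⟩
          rw [hτadj a b hab]; exact h1
        · rintro ⟨hab, hτe⟩
          have h1 : κ a = C := by rw [← hτadj a b hab]; exact hτe
          refine ⟨hab, h1, ?_⟩
          rw [hκ] at h1 ⊢
          rw [← ConnectedComponent.connectedComponentMk_eq_of_adj hab]; exact h1
    have hhs : ∑ v, GC.degree v = 2 * GC.edgeFinset.card :=
      GC.sum_degrees_eq_twice_card_edges
    have hdeg1 : ∀ v, GC.degree v ≤ d := by
      intro v
      have hsub : GC.neighborSet v ⊆ G.neighborSet v := by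
        intro w hw; exact hw.1
      have h2 : (GC.neighborSet v).ncard ≤ (G.neighborSet v).ncard :=
        Set.ncard_le_ncard hsub (Set.toFinite _)
      have h3 : GC.degree v = (GC.neighborSet v).ncard := by
        rw [Set.ncard_eq_toFinset_card']
        rfl
      rw [h3]
      exact h2.trans (hdeg v)
    have hfib : ∀ v, v ∈ Finset.univ.filter (fun v => κ v = C) ↔ κ v = C := by
      intro v; simp
    have hdeg2 : ∀ v, κ v = C → GC.degree v ≤ nC C - 1 := by
      intro v hv
      have hsub : GC.neighborFinset v ⊆ (Finset.univ.filter (fun v => κ v = C)).erase v := by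
        intro w hw
        rw [mem_neighborFinset] at hw
        rw [Finset.mem_erase, hfib]
        exact ⟨hw.1.ne', hw.2.2⟩
      have := Finset.card_le_card hsub
      rw [Finset.card_erase_of_mem ((hfib v).mpr hv)] at this
      exact this
    have hdeg0 : ∀ v, κ v ≠ C → GC.degree v = 0 := by
      intro v hv
      rw [← card_neighborFinset_eq_degree, Finset.card_eq_zero]
      ext w
      simp only [mem_neighborFinset, Finset.notMem_empty, iff_false]
      rintro ⟨_, h2, _⟩
      exact hv h2
    have hsum1 : ∑ v, GC.degree v = ∑ v ∈ Finset.univ.filter (fun v => κ v = C), GC.degree v := by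
      symm
      apply Finset.sum_subset (Finset.subset_univ _)
      intro x _ hx
      rw [hfib] at hx
      exact hdeg0 x hx
    have hb1 : ∑ v ∈ Finset.univ.filter (fun v => κ v = C), GC.degree v ≤ nC C * d := by
      have h := Finset.sum_le_card_nsmul (Finset.univ.filter (fun v => κ v = C))
        (fun v => GC.degree v) d (fun x _ => hdeg1 x)
      simpa [smul_eq_mul] using h
    have hb2 : ∑ v ∈ Finset.univ.filter (fun v => κ v = C), GC.degree v ≤
        nC C * (nC C - 1) := by
      have h := Finset.sum_le_card_nsmul (Finset.univ.filter (fun v => κ v = C))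
        (fun v => GC.degree v) (nC C - 1) (fun x hx => hdeg2 x ((hfib x).mp hx))
      simpa [smul_eq_mul] using h
    have he : eC C = GC.edgeFinset.card := by rw [hGCedge]
    constructor
    · calc 2 * eC C = ∑ v, GC.degree v := by rw [he, hhs]
        _ = _ := hsum1
        _ ≤ nC C * d := hb1
    · calc 2 * eC C = ∑ v, GC.degree v := by rw [he, hhs]
        _ = _ := hsum1
        _ ≤ nC C * (nC C - 1) := hb2
  -- per-component edge bound
  have hperC : ∀ C, eC C ≤ mC C * d + (if k ≤ mC C then d / 2 else 0) := by
    intro C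
    obtain ⟨h1, h2⟩ := hkey2 C
    have hnc := hn_le C
    have hce := hceven C
    by_cases hbig : k ≤ mC C
    · rw [if_pos hbig]
      have e1 : 2 * eC C ≤ (2 * mC C + 1) * d :=
        le_trans h1 (Nat.mul_le_mul_right d (by omega))
      have e2 : (2 * mC C + 1) * d = 2 * (mC C * d) + d := by ring
      have e3 : d ≤ 2 * (d / 2) + 1 := by omega
      rw [e2] at e1
      set A := mC C * d
      omega
    · rw [if_neg hbig]
      have e1 : 2 * eC C ≤ (2 * mC C + 1) * (2 * mC C) :=
        le_trans h2 (Nat.mul_le_mul (by omega) (by omega))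
      have e2 : (2 * mC C + 1) * (2 * mC C) = 2 * (mC C * (2 * mC C + 1)) := by ring
      have e3 : mC C * (2 * mC C + 1) ≤ mC C * d :=
        Nat.mul_le_mul_left _ (by omega)
      rw [e2] at e1
      set A := mC C * d
      omega
  -- summation
  set ν := (msupp f).card / 2 with hν
  have hνsum : ∑ C, mC C = ν := by
    have h2 : ∑ C, (sC C).card = ∑ C, 2 * mC C :=
      Finset.sum_congr rfl (fun C _ => hceven C)
    rw [h2, ← Finset.mul_sum] at hssum
    omega
  set B := Finset.univ.filter (fun C => k ≤ mC C) with hB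
  have hBcard : B.card * k ≤ ν := by
    have h1 : ∑ C ∈ B, mC C ≤ ∑ C, mC C :=
      Finset.sum_le_sum_of_subset (Finset.subset_univ _)
    have h2 : B.card * k ≤ ∑ C ∈ B, mC C := by
      have h := Finset.card_nsmul_le_sum B mC k
        (fun x hx => (Finset.mem_filter.mp hx).2)
      simpa [smul_eq_mul] using h
    omega
  have hBdiv : B.card ≤ ν / k := (Nat.le_div_iff_mul_le hkpos).mpr hBcard
  have hfinal : ∑ C, eC C ≤ ν * d + (d / 2) * (ν / k) := by
    calc ∑ C, eC C ≤ ∑ C, (mC C * d + (if k ≤ mC C then d / 2 else 0)) :=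
          Finset.sum_le_sum (fun C _ => hperC C)
      _ = (∑ C, mC C) * d + ∑ C, (if k ≤ mC C then d / 2 else 0) := by
          rw [Finset.sum_add_distrib, Finset.sum_mul]
      _ = ν * d + B.card * (d / 2) := by
          rw [hνsum]
          congr 1
          rw [← Finset.sum_filter, ← hB, Finset.sum_const, smul_eq_mul]
      _ ≤ ν * d + (d / 2) * (ν / k) := by
          have h3 : B.card * (d / 2) ≤ (d / 2) * (ν / k) := by
            rw [mul_comm]
            exact Nat.mul_le_mul_left _ hBdiv
          omega
  have hEcard : G.edgeSet.ncard = E.card := by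
    rw [hE, Set.ncard_eq_toFinset_card']
    simp [SimpleGraph.edgeFinset]
  rw [hEcard, hesum]
  exact hfinal

lemma msupp_closed {f : V → V} (hinv : Function.Involutive f) :
    ∀ a ∈ msupp f, f a ∈ msupp f := by
  intro a ha
  rw [mem_msupp] at ha ⊢
  rw [hinv a]
  exact Ne.symm ha

lemma msupp_nofix {f : V → V} : ∀ a ∈ msupp f, f a ≠ a :=
  fun a ha => mem_msupp.mp ha

lemma master (d : ℕ) (hd : 1 ≤ d) :
    ∀ (n : ℕ) (G : SimpleGraph V) [DecidableRel G.Adj], G.edgeSet.ncard = n →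
      (∀ v, (G.neighborSet v).ncard ≤ d) →
      G.edgeSet.ncard ≤ (maxc G / 2) * d + (d / 2) * ((maxc G / 2) / ((d + 1) / 2)) := by
  intro n
  induction n using Nat.strong_induction_on with
  | _ n ih =>
    intro G _inst hn hdeg
    by_cases hcase : ∃ v, 0 < (G.neighborSet v).ncard ∧
        ∀ h, IsMF G h → (∀ g, IsMF G g → (msupp g).card ≤ (msupp h).card) → h v ≠ v
    · obtain ⟨v, hdv, hess⟩ := hcase
      set G' := G.deleteEdges (G.incidenceSet v) with hG'
      haveI : DecidableRel G'.Adj := Classical.decRel _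
      have hG'adj : ∀ a b, G'.Adj a b ↔ (G.Adj a b ∧ s(a, b) ∉ G.incidenceSet v) := by
        intro a b
        rw [hG', deleteEdges_adj]
      have hG'le : ∀ a b, G'.Adj a b → G.Adj a b := fun a b h => ((hG'adj a b).mp h).1
      have hG'v : ∀ b, ¬ G'.Adj v b := by
        intro b h
        obtain ⟨h1, h2⟩ := (hG'adj v b).mp h
        exact h2 ⟨G.mem_edgeSet.mpr h1, Sym2.mem_mk_left v b⟩
      have hinccard : (G.incidenceSet v).ncard = (G.neighborSet v).ncard := by
        rw [← Nat.card_coe_set_eq, ← Nat.card_coe_set_eq]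
        exact Nat.card_congr (G.incidenceSetEquivNeighborSet v)
      have hincsub : G.incidenceSet v ⊆ G.edgeSet := G.incidenceSet_subset v
      have he' : G'.edgeSet.ncard = n - (G.neighborSet v).ncard := by
        rw [hG', edgeSet_deleteEdges, Set.ncard_diff hincsub, hn, hinccard]
      have hle : (G.neighborSet v).ncard ≤ n := by
        rw [← hn, ← hinccard]
        exact Set.ncard_le_ncard hincsub (Set.toFinite _)
      obtain ⟨F, hF, hFcard, hFmax⟩ := exists_maxMF G
      have hFv : F v ≠ v := hess F hF (fun g hg => hFcard ▸ le_maxc hg)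
      have hmaxc2 : 2 ≤ maxc G := by
        rw [← hFcard]
        have h1 : v ∈ msupp F := mem_msupp.mpr hFv
        have h2 : F v ∈ msupp F := msupp_closed hF.1 v h1
        have hsub : ({v, F v} : Finset V) ⊆ msupp F := by
          intro x hx
          rcases Finset.mem_insert.mp hx with rfl | hx
          · exact h1
          · rw [Finset.mem_singleton.mp hx]; exact h2
        calc 2 = ({v, F v} : Finset V).card := (Finset.card_pair (Ne.symm hFv)).symm
          _ ≤ _ := Finset.card_le_card hsub
      have hmaxceven : ∃ b, maxc G = 2 * b := by
        have h := pairing_card hF.1 (msupp F) (msupp_closed hF.1) msupp_nofix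
        exact ⟨_, hFcard ▸ h⟩
      have hmax' : maxc G' ≤ maxc G - 2 := by
        apply csSup_le'
        rintro m ⟨g, hg, rfl⟩
        have hgG : IsMF G g := ⟨hg.1, fun w hw => hG'le w (g w) (hg.2 w hw)⟩
        have hgv : g v = v := by
          by_contra hgv
          exact hG'v (g v) (hg.2 v hgv)
        have h1 : (msupp g).card ≤ maxc G := le_maxc hgG
        have h2 : (msupp g).card ≠ maxc G := by
          intro heq
          refine hess g hgG ?_ hgv
          intro h hh
          rw [heq]
          exact le_maxc hh
        have heveng : ∃ b, (msupp g).card = 2 * b :=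
          ⟨_, pairing_card hg.1 (msupp g) (msupp_closed hg.1) msupp_nofix⟩
        obtain ⟨b1, hb1⟩ := heveng
        obtain ⟨b2, hb2⟩ := hmaxceven
        omega
      have hn' : G'.edgeSet.ncard < n := by
        rw [he']; omega
      have hdeg' : ∀ w, (G'.neighborSet w).ncard ≤ d := by
        intro w
        refine le_trans (Set.ncard_le_ncard ?_ (Set.toFinite _)) (hdeg w)
        intro x hx
        exact hG'le w x hx
      have hIH := ih _ hn' G' rfl hdeg'
      have hνν : maxc G' / 2 + 1 ≤ maxc G / 2 := by omega
      set k' := (d + 1) / 2 with hk'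
      set P1 := (maxc G' / 2) * d with hP1
      set P2 := (maxc G / 2) * d with hP2
      set Q1 := (d / 2) * ((maxc G' / 2) / k') with hQ1
      set Q2 := (d / 2) * ((maxc G / 2) / k') with hQ2
      have t1 : P1 + d ≤ P2 := by
        rw [hP1, hP2]
        calc (maxc G' / 2) * d + d = (maxc G' / 2 + 1) * d := by ring
          _ ≤ (maxc G / 2) * d := Nat.mul_le_mul_right d hνν
      have t2 : Q1 ≤ Q2 := by
        rw [hQ1, hQ2]
        exact Nat.mul_le_mul_left _ (Nat.div_le_div_right (by omega))
      have hdv' := hdeg v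
      omega
    · push_neg at hcase
      obtain ⟨f, hf, hfcard, hfmax'⟩ := exists_maxMF G
      have hfmax : ∀ g, IsMF G g → (msupp g).card ≤ (msupp f).card :=
        fun g hg => hfcard ▸ le_maxc hg
      have hin : ∀ w, ∃ h, IsMF G h ∧
          (∀ g, IsMF G g → (msupp g).card ≤ (msupp h).card) ∧ h w = w := by
        intro w
        rcases Nat.eq_zero_or_pos (G.neighborSet w).ncard with hw | hw
        · refine ⟨f, hf, hfmax, ?_⟩
          by_contra hfw
          have hadj := hf.2 w hfw
          have hmem : f w ∈ G.neighborSet w := hadj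
          have : (G.neighborSet w) = ∅ :=
            (Set.ncard_eq_zero (Set.toFinite _)).mp hw
          rw [this] at hmem
          exact hmem
        · obtain ⟨h, hh, hhmax, hhw⟩ := hcase w hw
          exact ⟨h, hh, hhmax, hhw⟩
      have hbound := terminal_bound d hd G hdeg hf hfmax hin
      rwa [hfcard] at hbound

lemma maxc_le_matchingNumber (G : SimpleGraph V) : maxc G / 2 ≤ matchingNumber G := by
  classical
  obtain ⟨f, hf, hfcard, _⟩ := exists_maxMF G
  set M : G.Subgraph :=
    { verts := ↑(msupp f),
      Adj := fun a b => f a = b ∧ a ≠ b,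
      adj_sub := by
        rintro a b ⟨h1, h2⟩
        have := hf.2 a (by rw [h1]; exact Ne.symm h2)
        rwa [h1] at this
      edge_vert := by
        rintro a b ⟨h1, h2⟩
        simp only [Finset.coe_filter, msupp]
        simp only [Set.mem_setOf_eq, Finset.mem_univ, true_and]
        rw [h1]; exact Ne.symm h2
      symm := by
        constructor
        rintro a b ⟨h1, h2⟩
        exact ⟨by rw [← h1, hf.1], Ne.symm h2⟩ } with hM
  have hmatch : M.IsMatching := by
    intro v hv
    have hv' : f v ≠ v := by
      have : v ∈ msupp f := hv
      exact mem_msupp.mp this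
    refine ⟨f v, ⟨rfl, Ne.symm hv'⟩, ?_⟩
    rintro y ⟨h1, h2⟩
    exact h1.symm
  have hedge : M.edgeSet = ↑((msupp f).image (fun a => s(a, f a))) := by
    ext e
    induction e using Sym2.ind with
    | _ a b =>
      simp only [Subgraph.mem_edgeSet, Finset.coe_image, Set.mem_image,
        Finset.mem_coe, mem_msupp]
      constructor
      · rintro ⟨h1, h2⟩
        refine ⟨a, by rw [h1]; exact Ne.symm h2, by rw [h1]⟩
      · rintro ⟨c, hc, hce⟩
        rw [Sym2.eq_iff] at hce
        rcases hce with ⟨rfl, rfl⟩ | ⟨h1, h2⟩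
        · exact ⟨rfl, Ne.symm hc⟩
        · subst h1
          subst h2
          exact ⟨hf.1 c, hc⟩
  have hncard : M.edgeSet.ncard = (msupp f).card / 2 := by
    rw [hedge, Set.ncard_coe_finset]
    have h := pairing_card hf.1 (msupp f) (msupp_closed hf.1) msupp_nofix
    omega
  have hbdd : BddAbove {m | ∃ M : G.Subgraph, M.IsMatching ∧ M.edgeSet.ncard = m} := by
    refine ⟨Fintype.card (Sym2 V), ?_⟩
    rintro m ⟨N, _, rfl⟩
    calc N.edgeSet.ncard ≤ (Set.univ : Set (Sym2 V)).ncard :=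
          Set.ncard_le_ncard (Set.subset_univ _) (Set.toFinite _)
      _ = Fintype.card (Sym2 V) := by rw [Set.ncard_univ, Nat.card_eq_fintype_card]
  have hmem : (msupp f).card / 2 ∈
      {m | ∃ M : G.Subgraph, M.IsMatching ∧ M.edgeSet.ncard = m} := ⟨M, hmatch, hncard⟩
  calc maxc G / 2 = (msupp f).card / 2 := by rw [hfcard]
    _ ≤ matchingNumber G := le_csSup hbdd hmem

end AuxiliaryMatchingTheory

/-- Hanson et al.: for any graph with maximum degree `Δ ≥ 1` and matching number `ν ≥ 1`,
`e(G) ≤ νΔ + ⌊Δ/2⌋⌊ν/⌈Δ/2⌉⌋`. -/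
theorem edge_bound_of_maxDegree_matchingNumber {V : Type*} [Fintype V]
    (G : SimpleGraph V) [DecidableRel G.Adj]
    (hΔ : 1 ≤ G.maxDegree) (hν : 1 ≤ matchingNumber G) :
    G.edgeFinset.card ≤ matchingNumber G * G.maxDegree +
      (G.maxDegree / 2) * (matchingNumber G / ((G.maxDegree + 1) / 2)) := by
  classical
  haveI : DecidableEq V := Classical.decEq V
  have hdeg : ∀ v, (G.neighborSet v).ncard ≤ G.maxDegree := by
    intro v
    have h1 : (G.neighborSet v).ncard = G.degree v := by
      rw [Set.ncard_eq_toFinset_card']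
      rfl
    rw [h1]
    exact G.degree_le_maxDegree v
  have hmaster := master G.maxDegree hΔ G.edgeSet.ncard G rfl hdeg
  have hbridge := maxc_le_matchingNumber G
  have hedge : G.edgeFinset.card = G.edgeSet.ncard := by
    rw [Set.ncard_eq_toFinset_card']
    simp [SimpleGraph.edgeFinset]
  rw [hedge]
  set d := G.maxDegree with hd2
  set ν1 := maxc G / 2 with hν1
  set ν2 := matchingNumber G with hν2
  set k' := (d + 1) / 2 with hk'
  set P1 := ν1 * d with hP1
  set P2 := ν2 * d with hP2
  set Q1 := (d / 2) * (ν1 / k') with hQ1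
  set Q2 := (d / 2) * (ν2 / k') with hQ2
  have t1 : P1 ≤ P2 := Nat.mul_le_mul_right d hbridge
  have t2 : Q1 ≤ Q2 := Nat.mul_le_mul_left _ (Nat.div_le_div_right hbridge)
  omega
end

section
/- If a graph G has maximum degree at most k−1 and matching number at most k−1, then e(G) ≤ k(k−1). -/
open SimpleGraph

section AuxMatching

set_option linter.unusedSectionVars false
set_option linter.unusedVariables false
set_option maxHeartbeats 1000000

variable {V : Type*} [Fintype V] [DecidableEq V]
attribute [local instance] Classical.propDecidable

/-- Matching as a finset of edges. -/
def IsMatchingF (G : SimpleGraph V) (M : Finset (Sym2 V)) : Prop :=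
  (∀ e ∈ M, e ∈ G.edgeSet) ∧ ∀ e ∈ M, ∀ f ∈ M, e ≠ f → ∀ x, x ∈ e → x ∉ f

def matchedF (M : Finset (Sym2 V)) (x : V) : Prop := ∃ e ∈ M, x ∈ e

open Classical in
noncomputable def nuF (G : SimpleGraph V) : ℕ :=
  Finset.sup ((Finset.univ : Finset (Finset (Sym2 V))).filter fun M => IsMatchingF G M)
    Finset.card

lemma isMatchingF_empty (G : SimpleGraph V) : IsMatchingF G ∅ := by
  constructor <;> simp

open Classical in
lemma card_le_nuF {G : SimpleGraph V} {M : Finset (Sym2 V)} (h : IsMatchingF G M) :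
    M.card ≤ nuF G := by
  apply Finset.le_sup (f := Finset.card)
  simp [h]

open Classical in
lemma exists_max_matching (G : SimpleGraph V) :
    ∃ M, IsMatchingF G M ∧ M.card = nuF G := by
  obtain ⟨M, hM, hcard⟩ := Finset.exists_mem_eq_sup
    ((Finset.univ : Finset (Finset (Sym2 V))).filter fun M => IsMatchingF G M)
    ⟨∅, by simp [isMatchingF_empty]⟩ Finset.card
  exact ⟨M, by simpa using hM, hcard.symm⟩

lemma nuF_mono {G H : SimpleGraph V} (h : H.edgeSet ⊆ G.edgeSet) : nuF H ≤ nuF G := by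
  obtain ⟨M, hM, hc⟩ := exists_max_matching H
  rw [← hc]
  exact card_le_nuF ⟨fun e he => h (hM.1 e he), hM.2⟩

/-- extension of a matching by an edge with both endpoints unmatched -/
lemma no_augment {G : SimpleGraph V} {M : Finset (Sym2 V)} (hM : IsMatchingF G M)
    (hcard : M.card = nuF G) {a b : V} (hadj : G.Adj a b)
    (ha : ¬ matchedF M a) (hb : ¬ matchedF M b) : False := by
  have hab : s(a, b) ∉ M := fun h => ha ⟨_, h, by simp⟩
  have hM' : IsMatchingF G (insert s(a, b) M) := by
    refine ⟨?_, ?_⟩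
    · intro e he
      rcases Finset.mem_insert.1 he with rfl | he
      · exact hadj
      · exact hM.1 e he
    · intro e he f hf hef x hxe hxf
      rcases Finset.mem_insert.1 he with rfl | he <;>
        rcases Finset.mem_insert.1 hf with rfl | hf
      · exact hef rfl
      · rcases Sym2.mem_iff.1 hxe with h | h
        · exact ha ⟨f, hf, h ▸ hxf⟩
        · exact hb ⟨f, hf, h ▸ hxf⟩
      · rcases Sym2.mem_iff.1 hxf with h | h
        · exact ha ⟨e, he, h ▸ hxe⟩
        · exact hb ⟨e, he, h ▸ hxe⟩
      · exact hM.2 e he f hf hef x hxe hxf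
  have := card_le_nuF hM'
  rw [Finset.card_insert_of_notMem hab, hcard] at this
  omega


lemma matchingF_unique {G : SimpleGraph V} {M : Finset (Sym2 V)} (hM : IsMatchingF G M)
    {e f : Sym2 V} (he : e ∈ M) (hf : f ∈ M) {x : V} (hx : x ∈ e) (hx' : x ∈ f) : e = f := by
  by_contra h
  exact hM.2 e he f hf h x hx hx'

lemma exists_other {G : SimpleGraph V} {e : Sym2 V} (he : e ∈ G.edgeSet) {w : V} (hw : w ∈ e) :
    ∃ w₁, e = s(w, w₁) ∧ w₁ ≠ w ∧ G.Adj w w₁ := by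
  induction e with | _ a b =>
  rw [SimpleGraph.mem_edgeSet] at he
  rcases Sym2.mem_iff.1 hw with rfl | rfl
  · exact ⟨b, rfl, (G.ne_of_adj he).symm, he⟩
  · exact ⟨a, Sym2.eq_swap, G.ne_of_adj he, he.symm⟩

lemma matchedF_swap {M : Finset (Sym2 V)} {G : SimpleGraph V} (hM : IsMatchingF G M)
    {e f : Sym2 V} (he : e ∈ M) (z : V) :
    matchedF (insert f (M.erase e)) z ↔ z ∈ f ∨ (matchedF M z ∧ z ∉ e) := by
  constructor
  · rintro ⟨g, hg, hzg⟩
    rcases Finset.mem_insert.1 hg with hgf | hg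
    · exact Or.inl (hgf ▸ hzg)
    · have hgM := Finset.mem_of_mem_erase hg
      have hge := Finset.ne_of_mem_erase hg
      refine Or.inr ⟨⟨g, hgM, hzg⟩, fun hze => hge ?_⟩
      exact matchingF_unique hM hgM he hzg hze
  · rintro (hzf | ⟨⟨g, hg, hzg⟩, hze⟩)
    · exact ⟨f, Finset.mem_insert_self _ _, hzf⟩
    · exact ⟨g, Finset.mem_insert_of_mem (Finset.mem_erase.2 ⟨fun h => hze (h ▸ hzg), hg⟩), hzg⟩

lemma isMatchingF_swap {G : SimpleGraph V} {M : Finset (Sym2 V)} (hM : IsMatchingF G M)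
    {e f : Sym2 V} (he : e ∈ M) (hfE : f ∈ G.edgeSet)
    (hdisj : ∀ x, x ∈ f → ∀ g ∈ M, g ≠ e → x ∉ g) :
    IsMatchingF G (insert f (M.erase e)) := by
  refine ⟨?_, ?_⟩
  · intro g hg
    rcases Finset.mem_insert.1 hg with hgf | hg
    · exact hgf ▸ hfE
    · exact hM.1 g (Finset.mem_of_mem_erase hg)
  · intro g hg g' hg' hgg' x hxg hxg'
    rcases Finset.mem_insert.1 hg with hgf | hg <;> rcases Finset.mem_insert.1 hg' with hgf' | hg'
    · exact hgg' (hgf.trans hgf'.symm)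
    · exact hdisj x (hgf ▸ hxg) g' (Finset.mem_of_mem_erase hg') (Finset.ne_of_mem_erase hg') hxg'
    · exact hdisj x (hgf' ▸ hxg') g (Finset.mem_of_mem_erase hg) (Finset.ne_of_mem_erase hg) hxg
    · exact hM.2 g (Finset.mem_of_mem_erase hg) g' (Finset.mem_of_mem_erase hg') hgg' x hxg hxg'

lemma card_swap {M : Finset (Sym2 V)} {e f : Sym2 V} (he : e ∈ M) (hf : f ∉ M) :
    (insert f (M.erase e)).card = M.card := by
  have h1 : f ∉ M.erase e := fun h => hf (Finset.mem_of_mem_erase h)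
  rw [Finset.card_insert_of_notMem h1, Finset.card_erase_of_mem he]
  have := Finset.card_pos.2 ⟨e, he⟩
  omega

theorem key_lemma_s1 (G : SimpleGraph V) : ∀ (n : ℕ) (M N : Finset (Sym2 V)) (w : V),
    (N \ M).card ≤ n →
    IsMatchingF G M → IsMatchingF G N → M.card = nuF G → N.card = nuF G →
    matchedF M w → ¬ matchedF N w →
    ∃ M' y, IsMatchingF G M' ∧ M'.card = nuF G ∧ M' ⊆ M ∪ N ∧
      ¬ matchedF M y ∧ matchedF N y ∧ y ≠ w ∧
      ∀ z, ¬ matchedF M' z ↔ ((¬ matchedF M z ∨ z = w) ∧ z ≠ y) := by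
  intro n
  induction n using Nat.strong_induction_on with
  | _ n ih =>
  intro M N w hn hM hN hMc hNc hMw hNw
  obtain ⟨e, heM, hwe⟩ := hMw
  have heE : e ∈ G.edgeSet := hM.1 e heM
  obtain ⟨w₁, rfl, hw₁w, hadj⟩ := exists_other heE hwe
  have hMw : matchedF M w := ⟨_, heM, by simp⟩
  have hMw₁ : matchedF M w₁ := ⟨_, heM, by simp⟩
  have heN : s(w, w₁) ∉ N := fun h => hNw ⟨_, h, by simp⟩
  have hNw₁ : matchedF N w₁ := by
    by_contra h
    exact no_augment hN hNc hadj hNw h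
  obtain ⟨f, hfN, hw₁f⟩ := hNw₁
  have hfE : f ∈ G.edgeSet := hN.1 f hfN
  have hfe : f ≠ s(w, w₁) := fun h => heN (h ▸ hfN)
  have hfM : f ∉ M := fun h => hfe (matchingF_unique hM h heM hw₁f (by simp))
  have hwf : w ∉ f := fun h => hNw ⟨f, hfN, h⟩
  obtain ⟨w₂, hf2, hw₂w₁, hadj₁⟩ := exists_other hfE hw₁f
  subst hf2
  have hw₂w : w₂ ≠ w := fun h => hwf (by simp [h])
  have hw₂e : w₂ ∉ s(w, w₁) := by
    rw [Sym2.mem_iff]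
    push_neg
    exact ⟨hw₂w, fun h => hw₂w₁ h⟩
  have hw₁fmem : w₁ ∈ s(w₁, w₂) := by simp
  have hw₂fmem : w₂ ∈ s(w₁, w₂) := by simp
  have hw_only : ∀ g ∈ M, w ∈ g → g = s(w, w₁) := fun g hg hwg =>
    matchingF_unique hM hg heM hwg (by simp)
  have hw₁_only_M : ∀ g ∈ M, w₁ ∈ g → g = s(w, w₁) := fun g hg hwg =>
    matchingF_unique hM hg heM hwg (by simp)
  have hw₁_only_N : ∀ g ∈ N, w₁ ∈ g → g = s(w₁, w₂) := fun g hg hwg =>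
    matchingF_unique hN hg hfN hwg hw₁fmem
  by_cases hw₂M : matchedF M w₂
  · -- recursive case
    set Nt := insert s(w, w₁) (N.erase s(w₁, w₂)) with hNt
    have hNtM : IsMatchingF G Nt := by
      refine isMatchingF_swap hN hfN heE ?_
      intro x hx g hg hgf hxg
      rcases Sym2.mem_iff.1 hx with rfl | rfl
      · exact hNw ⟨g, hg, hxg⟩
      · exact hgf (hw₁_only_N g hg hxg)
    have hNtc : Nt.card = nuF G := by rw [hNt, card_swap hfN heN]; exact hNc
    have hNtw₂ : ¬ matchedF Nt w₂ := by
      rintro ⟨g, hg, hw₂g⟩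
      rcases Finset.mem_insert.1 hg with hge | hg
      · exact hw₂e (hge ▸ hw₂g)
      · exact (Finset.ne_of_mem_erase hg)
          (matchingF_unique hN (Finset.mem_of_mem_erase hg) hfN hw₂g hw₂fmem)
    have hmeas : (Nt \ M).card < n := by
      have hfNM : s(w₁, w₂) ∈ N \ M := Finset.mem_sdiff.2 ⟨hfN, hfM⟩
      have hsub : Nt \ M ⊆ (N \ M).erase s(w₁, w₂) := by
        intro g hg
        rcases Finset.mem_sdiff.1 hg with ⟨hg1, hg2⟩
        rcases Finset.mem_insert.1 hg1 with hge | hg1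
        · exact absurd (hge ▸ heM) hg2
        · exact Finset.mem_erase.2 ⟨Finset.ne_of_mem_erase hg1,
            Finset.mem_sdiff.2 ⟨Finset.mem_of_mem_erase hg1, hg2⟩⟩
      have h1 := Finset.card_le_card hsub
      have h2 := Finset.card_erase_of_mem hfNM
      have h3 := Finset.card_pos.2 ⟨_, hfNM⟩
      omega
    obtain ⟨M'', y, hM''m, hM''c, hM''sub, hyM, hyNt, hyw₂, hiff⟩ :=
      ih _ hmeas M Nt w₂ le_rfl hM hNtM hMc hNtc hw₂M hNtw₂
    have hyN : matchedF N y := by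
      obtain ⟨g, hg, hyg⟩ := hyNt
      rcases Finset.mem_insert.1 hg with hge | hg
      · exfalso
        rcases Sym2.mem_iff.1 (hge ▸ hyg) with rfl | rfl
        · exact hyM hMw
        · exact hyM hMw₁
      · exact ⟨g, Finset.mem_of_mem_erase hg, hyg⟩
    have hyw : y ≠ w := fun h => hyM (h ▸ hMw)
    have hyw₁ : y ≠ w₁ := fun h => hyM (h ▸ hMw₁)
    have hwM'' : matchedF M'' w := by
      by_contra h
      rcases ((hiff w).1 h).1 with h1 | h2
      · exact h1 hMw
      · exact hw₂w h2.symm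
    have heM'' : s(w, w₁) ∈ M'' := by
      obtain ⟨g, hg, hwg⟩ := hwM''
      have hge : g = s(w, w₁) := by
        rcases Finset.mem_union.1 (hM''sub hg) with hgM | hgNt
        · exact hw_only g hgM hwg
        · rcases Finset.mem_insert.1 hgNt with hge | hgN
          · exact hge
          · exact absurd ⟨g, Finset.mem_of_mem_erase hgN, hwg⟩ hNw
      exact hge ▸ hg
    have hw₂M'' : ¬ matchedF M'' w₂ :=
      (hiff w₂).2 ⟨Or.inr rfl, fun h => hyw₂ h.symm⟩
    have hfM'' : s(w₁, w₂) ∉ M'' := fun h => hw₂M'' ⟨_, h, hw₂fmem⟩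
    refine ⟨insert s(w₁, w₂) (M''.erase s(w, w₁)), y, ?_, ?_, ?_, hyM, hyN, hyw, ?_⟩
    · refine isMatchingF_swap hM''m heM'' hfE ?_
      intro x hx g hg hge hxg
      rcases Sym2.mem_iff.1 hx with rfl | rfl
      · apply hge
        rcases Finset.mem_union.1 (hM''sub hg) with hgM | hgNt
        · exact hw₁_only_M g hgM hxg
        · rcases Finset.mem_insert.1 hgNt with hge' | hgN
          · exact hge'
          · exact absurd (hw₁_only_N g (Finset.mem_of_mem_erase hgN) hxg)
              (Finset.ne_of_mem_erase hgN)
      · exact hw₂M'' ⟨g, hg, hxg⟩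
    · rw [card_swap heM'' hfM'']; exact hM''c
    · intro g hg
      rcases Finset.mem_insert.1 hg with hge | hg
      · exact hge ▸ Finset.mem_union_right _ hfN
      · rcases Finset.mem_union.1 (hM''sub (Finset.mem_of_mem_erase hg)) with h | h
        · exact Finset.mem_union_left _ h
        · rcases Finset.mem_insert.1 h with hge | h
          · exact hge ▸ Finset.mem_union_left _ heM
          · exact Finset.mem_union_right _ (Finset.mem_of_mem_erase h)
    · intro z
      rw [matchedF_swap hM''m heM'' z]
      constructor
      · intro hcon
        push_neg at hcon
        obtain ⟨hzf, himp⟩ := hcon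
        by_cases hz'' : matchedF M'' z
        · rcases Sym2.mem_iff.1 (himp hz'') with rfl | rfl
          · exact ⟨Or.inr rfl, hyw.symm ∘ Eq.symm ∘ Eq.symm⟩
          · exact absurd hw₁fmem hzf
        · obtain ⟨h1, hzy⟩ := (hiff z).1 hz''
          rcases h1 with h1 | rfl
          · exact ⟨Or.inl h1, hzy⟩
          · exact absurd hw₂fmem hzf
      · rintro ⟨h1, hzy⟩
        rcases h1 with h1 | rfl
        · have hzf : z ∉ s(w₁, w₂) := by
            rw [Sym2.mem_iff]
            push_neg
            exact ⟨fun h => h1 (h ▸ hMw₁), fun h => h1 (h ▸ hw₂M)⟩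
          have hz'' : ¬ matchedF M'' z := (hiff z).2 ⟨Or.inl h1, hzy⟩
          rintro (h | ⟨hm, _⟩)
          · exact hzf h
          · exact hz'' hm
        · rintro (h | ⟨_, hze⟩)
          · exact hwf h
          · exact hze (by simp)
  · -- base case : direct swap
    refine ⟨insert s(w₁, w₂) (M.erase s(w, w₁)), w₂, ?_, ?_, ?_, hw₂M, ⟨_, hfN, hw₂fmem⟩,
      hw₂w, ?_⟩
    · refine isMatchingF_swap hM heM hfE ?_
      intro x hx g hg hge hxg
      rcases Sym2.mem_iff.1 hx with rfl | rfl
      · exact hge (hw₁_only_M g hg hxg)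
      · exact hw₂M ⟨g, hg, hxg⟩
    · rw [card_swap heM hfM]; exact hMc
    · intro g hg
      rcases Finset.mem_insert.1 hg with hge | hg
      · exact hge ▸ Finset.mem_union_right _ hfN
      · exact Finset.mem_union_left _ (Finset.mem_of_mem_erase hg)
    · intro z
      rw [matchedF_swap hM heM z]
      constructor
      · intro hcon
        push_neg at hcon
        obtain ⟨hzf, himp⟩ := hcon
        by_cases hz : matchedF M z
        · rcases Sym2.mem_iff.1 (himp hz) with rfl | rfl
          · exact ⟨Or.inr rfl, fun h => hw₂w h.symm⟩
          · exact absurd hw₁fmem hzf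
        · exact ⟨Or.inl hz, fun h => hzf (h ▸ hw₂fmem)⟩
      · rintro ⟨h1, hzy⟩
        rcases h1 with h1 | rfl
        · rintro (h | ⟨hm, _⟩)
          · rcases Sym2.mem_iff.1 h with rfl | rfl
            · exact h1 hMw₁
            · exact hzy rfl
          · exact h1 hm
        · rintro (h | ⟨_, hze⟩)
          · exact hwf h
          · exact hze (by simp)


/-- The restriction of a graph to the edges inside a set of vertices. -/
def Gres (G : SimpleGraph V) (s : Set V) : SimpleGraph V where
  Adj x y := G.Adj x y ∧ x ∈ s ∧ y ∈ s
  symm := ⟨fun x y ⟨h, hx, hy⟩ => ⟨h.symm, hy, hx⟩⟩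
  loopless := ⟨fun x ⟨h, _⟩ => G.loopless.irrefl x h⟩

lemma mem_edgeSet_res {G : SimpleGraph V} {s : Set V} {e : Sym2 V} :
    e ∈ (Gres G s).edgeSet ↔ e ∈ G.edgeSet ∧ ∀ x ∈ e, x ∈ s := by
  induction e with | _ a b =>
  simp only [SimpleGraph.mem_edgeSet]
  constructor
  · rintro ⟨h, ha, hb⟩
    refine ⟨h, ?_⟩
    intro x hx
    rcases Sym2.mem_iff.1 hx with rfl | rfl <;> assumption
  · rintro ⟨h, hall⟩
    exact ⟨h, hall a (by simp), hall b (by simp)⟩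

lemma res_edgeSet_subset (G : SimpleGraph V) (s : Set V) :
    (Gres G s).edgeSet ⊆ G.edgeSet := fun _ h => (mem_edgeSet_res.1 h).1

lemma isMatchingF_of_res {G : SimpleGraph V} {s : Set V} {M : Finset (Sym2 V)}
    (h : IsMatchingF (Gres G s) M) : IsMatchingF G M :=
  ⟨fun e he => res_edgeSet_subset G s (h.1 e he), h.2⟩

lemma matchedF_subset_res {G : SimpleGraph V} {s : Set V} {M : Finset (Sym2 V)}
    (h : IsMatchingF (Gres G s) M) {x : V} (hx : matchedF M x) : x ∈ s := by
  obtain ⟨e, he, hxe⟩ := hx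
  exact (mem_edgeSet_res.1 (h.1 e he)).2 x hxe

/-- splitting the edges of a graph along a union-closed vertex set -/
lemma edgeSet_split {G : SimpleGraph V} {s : Set V}
    (hs : ∀ x y, G.Adj x y → (x ∈ s ↔ y ∈ s)) :
    G.edgeSet = (Gres G s).edgeSet ∪ (Gres G sᶜ).edgeSet := by
  ext e
  induction e with | _ a b =>
  constructor
  · intro h
    rw [SimpleGraph.mem_edgeSet] at h
    by_cases ha : a ∈ s
    · refine Or.inl (mem_edgeSet_res.2 ⟨h, ?_⟩)
      intro x hx
      rcases Sym2.mem_iff.1 hx with rfl | rfl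
      · exact ha
      · exact (hs _ _ h).1 ha
    · refine Or.inr (mem_edgeSet_res.2 ⟨h, ?_⟩)
      intro x hx
      rcases Sym2.mem_iff.1 hx with rfl | rfl
      · exact ha
      · exact fun hb => ha ((hs _ _ h).2 hb)
  · rintro (h | h)
    · exact res_edgeSet_subset _ _ h
    · exact res_edgeSet_subset _ _ h

lemma edgeSet_split_disjoint {G : SimpleGraph V} {s : Set V} :
    Disjoint (Gres G s).edgeSet (Gres G sᶜ).edgeSet := by
  rw [Set.disjoint_left]
  intro e h1 h2
  induction e with | _ a b =>
  exact ((mem_edgeSet_res.1 h2).2 a (by simp)) ((mem_edgeSet_res.1 h1).2 a (by simp))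

lemma ncard_split {G : SimpleGraph V} {s : Set V}
    (hs : ∀ x y, G.Adj x y → (x ∈ s ↔ y ∈ s)) :
    G.edgeSet.ncard = (Gres G s).edgeSet.ncard + (Gres G sᶜ).edgeSet.ncard := by
  rw [edgeSet_split hs]
  exact Set.ncard_union_eq edgeSet_split_disjoint (Set.toFinite _) (Set.toFinite _)

lemma nuF_superadd (G : SimpleGraph V) (s : Set V) :
    nuF (Gres G s) + nuF (Gres G sᶜ) ≤ nuF G := by
  obtain ⟨A, hA, hAc⟩ := exists_max_matching (Gres G s)
  obtain ⟨B, hB, hBc⟩ := exists_max_matching (Gres G sᶜ)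
  have hdisj : ∀ e ∈ A, e ∉ B := by
    intro e heA heB
    induction e with | _ a b =>
    exact ((mem_edgeSet_res.1 (hB.1 _ heB)).2 a (by simp))
      ((mem_edgeSet_res.1 (hA.1 _ heA)).2 a (by simp))
  have hm : IsMatchingF G (A ∪ B) := by
    constructor
    · intro e he
      rcases Finset.mem_union.1 he with h | h
      · exact res_edgeSet_subset _ _ (hA.1 e h)
      · exact res_edgeSet_subset _ _ (hB.1 e h)
    · intro e he f hf hef x hxe hxf
      rcases Finset.mem_union.1 he with he' | he' <;> rcases Finset.mem_union.1 hf with hf' | hf'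
      · exact hA.2 e he' f hf' hef x hxe hxf
      · exact ((mem_edgeSet_res.1 (hB.1 _ hf')).2 x hxf)
          ((mem_edgeSet_res.1 (hA.1 _ he')).2 x hxe)
      · exact ((mem_edgeSet_res.1 (hB.1 _ he')).2 x hxe)
          ((mem_edgeSet_res.1 (hA.1 _ hf')).2 x hxf)
      · exact hB.2 e he' f hf' hef x hxe hxf
  have hcard : (A ∪ B).card = A.card + B.card := by
    rw [Finset.card_union_of_disjoint (Finset.disjoint_left.2 hdisj)]
  calc nuF (Gres G s) + nuF (Gres G sᶜ) = (A ∪ B).card := by rw [hcard, hAc, hBc]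
  _ ≤ nuF G := card_le_nuF hm

/-- deleting a vertex -/
lemma ncard_delete (G : SimpleGraph V) (w : V) :
    G.edgeSet.ncard = (Gres G {x | x ≠ w}).edgeSet.ncard + (G.neighborSet w).ncard := by
  classical
  letI : DecidableRel G.Adj := fun a b => Classical.dec _
  have hsplit : G.edgeSet = (Gres G {x | x ≠ w}).edgeSet ∪ G.incidenceSet w := by
    ext e
    constructor
    · intro he
      by_cases hw : w ∈ e
      · exact Or.inr ⟨he, hw⟩
      · refine Or.inl (mem_edgeSet_res.2 ⟨he, ?_⟩)
        intro x hx hxw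
        exact hw (hxw ▸ hx)
    · rintro (h | h)
      · exact res_edgeSet_subset _ _ h
      · exact h.1
  have hdisj : Disjoint (Gres G {x | x ≠ w}).edgeSet (G.incidenceSet w) := by
    rw [Set.disjoint_left]
    rintro e h1 ⟨_, hw⟩
    exact (mem_edgeSet_res.1 h1).2 w hw rfl
  rw [hsplit, Set.ncard_union_eq hdisj (Set.toFinite _) (Set.toFinite _)]
  congr 1
  have := Nat.card_congr (G.incidenceSetEquivNeighborSet w)
  rwa [Nat.card_coe_set_eq, Nat.card_coe_set_eq] at this

lemma not_matched_of_del {G : SimpleGraph V} {w : V} {M : Finset (Sym2 V)}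
    (h : IsMatchingF (Gres G {x | x ≠ w}) M) : ¬ matchedF M w :=
  fun hm => matchedF_subset_res h hm rfl

lemma degree_zero_del {G : SimpleGraph V} {w : V} (h : (G.neighborSet w).ncard = 0) :
    (Gres G {x | x ≠ w}).edgeSet = G.edgeSet := by
  have hw : G.neighborSet w = ∅ := by
    rwa [Set.ncard_eq_zero (Set.toFinite _)] at h
  apply Set.Subset.antisymm (res_edgeSet_subset _ _)
  intro e he
  refine mem_edgeSet_res.2 ⟨he, ?_⟩
  intro x hx hxw
  subst hxw
  obtain ⟨y, hey, _, hadj⟩ := exists_other he hx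
  have : y ∈ G.neighborSet x := hadj
  rw [hw] at this
  exact this


lemma card_matched_le (M : Finset (Sym2 V)) :
    (Finset.univ.filter fun x : V => matchedF M x).card ≤ 2 * M.card := by
  induction M using Finset.induction_on with
  | empty => simp [matchedF]
  | @insert e M he ih =>
    have hsub : (Finset.univ.filter fun x : V => matchedF (insert e M) x) ⊆
        (Finset.univ.filter fun x : V => x ∈ e) ∪
        (Finset.univ.filter fun x : V => matchedF M x) := by
      intro x hx
      simp only [Finset.mem_filter, Finset.mem_univ, true_and] at hx
      obtain ⟨g, hg, hxg⟩ := hx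
      rcases Finset.mem_insert.1 hg with hge | hg
      · exact Finset.mem_union_left _ (by simp [hge ▸ hxg])
      · refine Finset.mem_union_right _ ?_
        simp only [Finset.mem_filter, Finset.mem_univ, true_and]
        exact ⟨g, hg, hxg⟩
    have h2 : (Finset.univ.filter fun x : V => x ∈ e).card ≤ 2 := by
      induction e with | _ a b =>
      refine le_trans (Finset.card_le_card (fun x hx => ?_)) (Finset.card_insert_le a {b})
      simp only [Finset.mem_filter, Finset.mem_univ, true_and, Sym2.mem_iff] at hx
      simp [hx]
    calc (Finset.univ.filter fun x : V => matchedF (insert e M) x).card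
        ≤ _ + _ := le_trans (Finset.card_le_card hsub) (Finset.card_union_le _ _)
      _ ≤ 2 + 2 * M.card := by omega
      _ = 2 * (insert e M).card := by rw [Finset.card_insert_of_notMem he]; ring

lemma ncard_neighborSet_eq_degree (G : SimpleGraph V) [DecidableRel G.Adj] (v : V) :
    (G.neighborSet v).ncard = G.degree v := by
  rw [← Nat.card_coe_set_eq, Nat.card_eq_fintype_card, G.card_neighborSet_eq_degree]

theorem main_bound (d : ℕ) : ∀ (n : ℕ) (G : SimpleGraph V),
    G.edgeSet.ncard ≤ n → (∀ v, (G.neighborSet v).ncard ≤ d) →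
    G.edgeSet.ncard ≤ nuF G * (d + 1) := by
  intro n
  induction n using Nat.strong_induction_on with
  | _ n ih =>
  intro G hmn hdeg
  classical
  by_cases hm0 : G.edgeSet.ncard = 0
  · simp [hm0]
  by_cases hconn : ∃ a b, 0 < (G.neighborSet a).ncard ∧ 0 < (G.neighborSet b).ncard ∧
      ¬ G.Reachable a b
  · -- disconnected case: split along a reachability class
    obtain ⟨a, b, ha, hb, hab⟩ := hconn
    set A : Set V := {z | G.Reachable a z} with hA
    have hs : ∀ x y, G.Adj x y → (x ∈ A ↔ y ∈ A) :=
      fun x y hxy => ⟨fun h => h.trans hxy.reachable, fun h => h.trans hxy.symm.reachable⟩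
    have hsplit := ncard_split (G := G) hs
    obtain ⟨z, hz⟩ := Set.nonempty_of_ncard_ne_zero (Nat.pos_iff_ne_zero.1 ha)
    have hza : G.Adj a z := hz
    have hmA : 0 < (Gres G A).edgeSet.ncard := by
      rw [Set.ncard_pos (Set.toFinite _)]
      refine ⟨s(a, z), mem_edgeSet_res.2 ⟨hza, ?_⟩⟩
      intro x hx
      rcases Sym2.mem_iff.1 hx with rfl | rfl
      · exact Reachable.refl x
      · exact hza.reachable
    obtain ⟨z', hz'⟩ := Set.nonempty_of_ncard_ne_zero (Nat.pos_iff_ne_zero.1 hb)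
    have hzb : G.Adj b z' := hz'
    have hbA : b ∈ Aᶜ := fun h => hab h
    have hmB : 0 < (Gres G Aᶜ).edgeSet.ncard := by
      rw [Set.ncard_pos (Set.toFinite _)]
      refine ⟨s(b, z'), mem_edgeSet_res.2 ⟨hzb, ?_⟩⟩
      intro x hx
      rcases Sym2.mem_iff.1 hx with rfl | rfl
      · exact hbA
      · exact fun h => hbA (h.trans hzb.symm.reachable)
    have hdegA : ∀ v, ((Gres G A).neighborSet v).ncard ≤ d := by
      intro v
      refine le_trans (Set.ncard_le_ncard ?_ (Set.toFinite _)) (hdeg v)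
      intro x hx
      exact hx.1
    have hdegB : ∀ v, ((Gres G Aᶜ).neighborSet v).ncard ≤ d := by
      intro v
      refine le_trans (Set.ncard_le_ncard ?_ (Set.toFinite _)) (hdeg v)
      intro x hx
      exact hx.1
    have hn1 : 1 ≤ n := by omega
    have hresA := ih (n - 1) (by omega) (Gres G A) (by omega) hdegA
    have hresB := ih (n - 1) (by omega) (Gres G Aᶜ) (by omega) hdegB
    have hsuper := nuF_superadd G A
    calc G.edgeSet.ncard = _ + _ := hsplit
      _ ≤ nuF (Gres G A) * (d+1) + nuF (Gres G Aᶜ) * (d+1) := by omega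
      _ = (nuF (Gres G A) + nuF (Gres G Aᶜ)) * (d+1) := by rw [Nat.add_mul]
      _ ≤ nuF G * (d+1) := Nat.mul_le_mul_right _ hsuper
  by_cases hess : ∃ w, nuF (Gres G {x | x ≠ w}) < nuF G
  · -- essential vertex case
    obtain ⟨w, hw⟩ := hess
    have hdegw : 0 < (G.neighborSet w).ncard := by
      rcases Nat.eq_zero_or_pos (G.neighborSet w).ncard with h | h
      · exfalso
        have := degree_zero_del (G := G) (w := w) h
        have h1 : nuF G ≤ nuF (Gres G {x | x ≠ w}) := nuF_mono (this ▸ Set.Subset.refl _)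
        omega
      · exact h
    have hdel := ncard_delete G w
    have hdel_le : (Gres G {x | x ≠ w}).edgeSet.ncard ≤ n - 1 := by omega
    have hdegdel : ∀ v, ((Gres G {x | x ≠ w}).neighborSet v).ncard ≤ d := by
      intro v
      refine le_trans (Set.ncard_le_ncard ?_ (Set.toFinite _)) (hdeg v)
      intro x hx
      exact hx.1
    have hres := ih (n - 1) (by omega) _ hdel_le hdegdel
    have hnu1 : 1 ≤ nuF G := by omega
    obtain ⟨c, hc⟩ : ∃ c, nuF G = c + 1 := ⟨nuF G - 1, by omega⟩
    have hnudel : nuF (Gres G {x | x ≠ w}) ≤ c := by omega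
    have hdw : (G.neighborSet w).ncard ≤ d := hdeg w
    have h1 : (Gres G {x | x ≠ w}).edgeSet.ncard ≤ c * (d+1) :=
      le_trans hres (Nat.mul_le_mul_right _ hnudel)
    have hgoal : (c + 1) * (d + 1) = c * (d + 1) + (d + 1) := by ring
    rw [hc]
    omega
  · -- Gallai case: every vertex is avoidable and non-isolated vertices are connected
    push_neg at hconn hess
    have havoid : ∀ w, nuF (Gres G {x | x ≠ w}) = nuF G := by
      intro w
      exact le_antisymm (nuF_mono (res_edgeSet_subset _ _)) (hess w)
    -- Claim: no maximum matching misses two distinct non-isolated vertices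
    have C1 : ∀ (M : Finset (Sym2 V)) (u v : V), IsMatchingF G M → M.card = nuF G →
        ¬ matchedF M u → ¬ matchedF M v → u ≠ v →
        0 < (G.neighborSet u).ncard → 0 < (G.neighborSet v).ncard → False := by
      intro M₁ u₁ v₁ hM₁ hM₁c hMu₁ hMv₁ huv₁ hu₁ hv₁
      set P : ℕ → Prop := fun D => ∃ M u v, IsMatchingF G M ∧ M.card = nuF G ∧
        ¬ matchedF M u ∧ ¬ matchedF M v ∧ u ≠ v ∧
        0 < (G.neighborSet u).ncard ∧ 0 < (G.neighborSet v).ncard ∧ G.dist u v = D with hP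
      haveI : DecidablePred P := fun _ => Classical.dec _
      have hPex : ∃ D, P D :=
        ⟨G.dist u₁ v₁, M₁, u₁, v₁, hM₁, hM₁c, hMu₁, hMv₁, huv₁, hu₁, hv₁, rfl⟩
      obtain ⟨M, u, v, hM, hMc, hMu, hMv, huv, hu, hv, hD⟩ := Nat.find_spec hPex
      set D₀ := Nat.find hPex with hD₀
      have hmin : ∀ D < D₀, ¬ P D := fun D h => Nat.find_min hPex h
      have hreach : G.Reachable u v := hconn u v hu hv
      have hD0pos : 0 < D₀ := by
        rcases Nat.eq_zero_or_pos D₀ with h | h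
        · exact absurd (hreach.dist_eq_zero_iff.1 (by omega)) huv
        · exact h
      obtain ⟨p, hp⟩ := hreach.exists_walk_length_eq_dist
      cases p with
      | nil => rw [Walk.length_nil] at hp; omega
      | @cons _ w _ hadj q =>
        rw [Walk.length_cons] at hp
        have hMw : matchedF M w := by
          by_contra h
          exact no_augment hM hMc hadj hMu h
        have hwv : w ≠ v := fun h => hMv (h ▸ hMw)
        have hdistwv : G.dist w v < D₀ := by
          have := G.dist_le q
          omega
        have hwdeg : 0 < (G.neighborSet w).ncard :=
          (Set.ncard_pos (Set.toFinite _)).2 ⟨u, hadj.symm⟩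
        obtain ⟨N, hN0, hNc0⟩ := exists_max_matching (Gres G {x | x ≠ w})
        have hN : IsMatchingF G N := isMatchingF_of_res hN0
        have hNc : N.card = nuF G := by rw [hNc0, havoid w]
        have hNw : ¬ matchedF N w := not_matched_of_del hN0
        have hNu : matchedF N u := by
          by_contra h
          exact no_augment hN hNc hadj h hNw
        have hNv : matchedF N v := by
          by_contra h
          exact hmin _ hdistwv ⟨N, w, v, hN, hNc, hNw, h, hwv, hwdeg, hv, rfl⟩
        obtain ⟨M', y, hM'm, hM'c, _, hyM, hyN, hyw, hiff⟩ :=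
          key_lemma_s1 G _ M N w le_rfl hM hN hMc hNc hMw hNw
        have hwM' : ¬ matchedF M' w := (hiff w).2 ⟨Or.inr rfl, fun h => hyw h.symm⟩
        by_cases hyu : y = u
        · have hvM' : ¬ matchedF M' v :=
            (hiff v).2 ⟨Or.inl hMv, fun h => huv ((h.trans hyu).symm)⟩
          exact hmin _ hdistwv ⟨M', w, v, hM'm, hM'c, hwM', hvM', hwv, hwdeg, hv, rfl⟩
        · have huM' : ¬ matchedF M' u :=
            (hiff u).2 ⟨Or.inl hMu, fun h => hyu h.symm⟩
          exact no_augment hM'm hM'c hadj huM' hwM'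
    -- Counting
    letI : DecidableRel G.Adj := fun a b => Classical.dec _
    obtain ⟨M₀, hM₀, hM₀c⟩ := exists_max_matching G
    set W : Finset V := Finset.univ.filter (fun x => 0 < (G.neighborSet x).ncard) with hW
    have hW1 : (W.filter fun x => ¬ matchedF M₀ x).card ≤ 1 := by
      rw [Finset.card_le_one]
      intro x hx y hy
      simp only [hW, Finset.mem_filter, Finset.mem_univ, true_and] at hx hy
      by_contra hxy
      exact C1 M₀ x y hM₀ hM₀c hx.2 hy.2 hxy hx.1 hy.1
    have hW2 : (W.filter fun x => matchedF M₀ x).card ≤ 2 * nuF G := by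
      rw [← hM₀c]
      refine le_trans (Finset.card_le_card ?_) (card_matched_le M₀)
      intro x hx
      simp only [hW, Finset.mem_filter, Finset.mem_univ, true_and] at hx ⊢
      exact hx.2
    have hWcard : W.card ≤ 2 * nuF G + 1 := by
      have hsub : W ⊆ (W.filter fun x => matchedF M₀ x) ∪ (W.filter fun x => ¬ matchedF M₀ x) := by
        intro x hx
        by_cases h : matchedF M₀ x
        · exact Finset.mem_union_left _ (Finset.mem_filter.2 ⟨hx, h⟩)
        · exact Finset.mem_union_right _ (Finset.mem_filter.2 ⟨hx, h⟩)
      have h1 := Finset.card_le_card hsub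
      have h2 := Finset.card_union_le (W.filter fun x => matchedF M₀ x)
        (W.filter fun x => ¬ matchedF M₀ x)
      omega
    have hsum : ∑ v ∈ W, G.degree v = 2 * G.edgeSet.ncard := by
      have h1 : G.edgeSet.ncard = G.edgeFinset.card := by
        rw [Set.ncard_eq_toFinset_card']
        exact congrArg Finset.card (by ext; simp)
      rw [h1, ← G.sum_degrees_eq_twice_card_edges]
      refine Finset.sum_subset (Finset.subset_univ W) ?_
      intro x _ hx
      simp only [hW, Finset.mem_filter, Finset.mem_univ, true_and, not_lt,
        Nat.le_zero] at hx
      rw [← ncard_neighborSet_eq_degree, hx]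
    have hd1 : ∑ v ∈ W, G.degree v ≤ W.card * d := by
      have hb : ∀ x ∈ W, G.degree x ≤ d := by
        intro x _
        rw [← ncard_neighborSet_eq_degree]
        exact hdeg x
      have h := Finset.sum_le_card_nsmul W (fun v => G.degree v) d hb
      simpa [smul_eq_mul] using h
    have hd2 : ∑ v ∈ W, G.degree v ≤ W.card * (W.card - 1) := by
      have hb : ∀ x ∈ W, G.degree x ≤ W.card - 1 := by
        intro x hx
        have hsub : G.neighborFinset x ⊆ W.erase x := by
          intro z hz
          rw [SimpleGraph.mem_neighborFinset] at hz
          refine Finset.mem_erase.2 ⟨fun h => G.loopless.irrefl x (h ▸ hz), ?_⟩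
          simp only [hW, Finset.mem_filter, Finset.mem_univ, true_and]
          exact (Set.ncard_pos (Set.toFinite _)).2 ⟨x, hz.symm⟩
        calc G.degree x ≤ (W.erase x).card := Finset.card_le_card hsub
          _ = W.card - 1 := Finset.card_erase_of_mem hx
      have h := Finset.sum_le_card_nsmul W (fun v => G.degree v) (W.card - 1) hb
      simpa [smul_eq_mul] using h
    -- final arithmetic
    rcases le_or_gt W.card (2 * nuF G) with ht' | ht'
    · have h3 : W.card * d ≤ 2 * nuF G * d := Nat.mul_le_mul_right _ ht'
      have h4 : 2 * nuF G * d = 2 * (nuF G * d) := by ring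
      have h5 : nuF G * (d + 1) = nuF G * d + nuF G := by ring
      omega
    · have ht'' : W.card = 2 * nuF G + 1 := by omega
      have ht1 : W.card - 1 = 2 * nuF G := by omega
      rcases le_or_gt d (2 * nuF G) with hd | hd
      · have h3 : W.card * d = 2 * (nuF G * d) + d := by rw [ht'']; ring
        have h5 : nuF G * (d + 1) = nuF G * d + nuF G := by ring
        omega
      · have h3 : W.card * (W.card - 1) = 2 * (nuF G * (2 * nuF G + 1)) := by
          rw [ht1, ht'']; ring
        have h4 : nuF G * (2 * nuF G + 1) ≤ nuF G * d := Nat.mul_le_mul_left _ (by omega)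
        have h5 : nuF G * (d + 1) = nuF G * d + nuF G := by ring
        omega


lemma nuF_le_matchingNumber (G : SimpleGraph V) : nuF G ≤ matchingNumber G := by
  obtain ⟨M, hM, hc⟩ := exists_max_matching G
  rw [← hc]
  set SG : G.Subgraph :=
    { verts := {v | matchedF M v}
      Adj := fun x y => s(x, y) ∈ M
      adj_sub := fun h => (SimpleGraph.mem_edgeSet G).1 (hM.1 _ h)
      edge_vert := fun h => ⟨_, h, by simp⟩
      symm := ⟨fun x y h => by rwa [Sym2.eq_swap]⟩ } with hSG
  have hmatch : SG.IsMatching := by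
    intro v hv
    obtain ⟨e, he, hve⟩ := hv
    obtain ⟨w₁, rfl, hw₁, _⟩ := exists_other (hM.1 e he) hve
    refine ⟨w₁, he, ?_⟩
    intro y hy
    have hy' : s(v, y) ∈ M := hy
    have : s(v, y) = s(v, w₁) := matchingF_unique hM hy' he (x := v) (by simp) (by simp)
    exact (Sym2.congr_right).1 this
  have hedge : SG.edgeSet = (M : Set (Sym2 V)) := by
    ext e
    induction e with | _ a b =>
    rw [SimpleGraph.Subgraph.mem_edgeSet]
    simp [hSG]
  have hncard : SG.edgeSet.ncard = M.card := by
    rw [hedge, Set.ncard_coe_finset]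
  have hbdd : BddAbove {m | ∃ M : G.Subgraph, M.IsMatching ∧ M.edgeSet.ncard = m} := by
    refine ⟨Fintype.card (Sym2 V), ?_⟩
    rintro m ⟨N, _, rfl⟩
    calc N.edgeSet.ncard ≤ (Set.univ : Set (Sym2 V)).ncard :=
          Set.ncard_le_ncard (Set.subset_univ _) (Set.toFinite _)
      _ = Fintype.card (Sym2 V) := by rw [Set.ncard_univ, Nat.card_eq_fintype_card]
  exact le_csSup hbdd ⟨SG, hmatch, hncard⟩


end AuxMatching

/-- If `Δ(G) ≤ k-1` and `ν(G) ≤ k-1` then `e(G) ≤ k(k-1)`. -/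
theorem edge_bound_of_small_maxDegree_matchingNumber {V : Type*} [Fintype V]
    (G : SimpleGraph V) [DecidableRel G.Adj] (k : ℕ) (hk : 1 ≤ k)
    (hΔ : G.maxDegree ≤ k - 1) (hν : matchingNumber G ≤ k - 1) :
    G.edgeFinset.card ≤ k * (k - 1) := by
  letI := Classical.decEq V
  have hdeg : ∀ v, (G.neighborSet v).ncard ≤ k - 1 := by
    intro v
    rw [ncard_neighborSet_eq_degree]
    exact le_trans (G.degree_le_maxDegree v) hΔ
  have hmain := main_bound (k - 1) G.edgeSet.ncard G le_rfl hdeg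
  have hcard : G.edgeSet.ncard = G.edgeFinset.card := by
    rw [Set.ncard_eq_toFinset_card']
    exact congrArg Finset.card (by ext; simp)
  have hnu : nuF G ≤ k - 1 := le_trans (nuF_le_matchingNumber G) hν
  have hk1 : k - 1 + 1 = k := by omega
  calc G.edgeFinset.card = G.edgeSet.ncard := hcard.symm
    _ ≤ nuF G * (k - 1 + 1) := hmain
    _ ≤ (k - 1) * (k - 1 + 1) := Nat.mul_le_mul_right _ hnu
    _ = k * (k - 1) := by rw [hk1]; ring
end

section
/- Let n = n₁ + … + n_{r−1} with n_i ≥ 0 and max_i |n_i − n/(r−1)| = a, achieved by n₁. Then Σ_{1≤i<j≤r−1} n_i n_j ≤ n₁(n−n₁) + (1 − 1/(r−2))·(n−n₁)²/2 ≤ −(r−1)a²/(2(r−2)) + (r−2)n²/(2(r−1)). -/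
open Finset

lemma pair_sum_id (m : ℕ) (f : Fin m → ℝ) :
    2 * ∑ p ∈ univ.filter (fun p : Fin m × Fin m => p.1 < p.2), f p.1 * f p.2
      = (∑ i, f i) ^ 2 - ∑ i, f i ^ 2 := by
  have hsq : (∑ i, f i) ^ 2 = ∑ p : Fin m × Fin m, f p.1 * f p.2 := by
    rw [sq, Finset.sum_mul_sum, ← Finset.sum_product']
    rfl
  have hsplit : (∑ p : Fin m × Fin m, f p.1 * f p.2)
      = (∑ p ∈ univ.filter (fun p : Fin m × Fin m => p.1 < p.2), f p.1 * f p.2)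
        + ((∑ p ∈ univ.filter (fun p : Fin m × Fin m => p.2 < p.1), f p.1 * f p.2)
        + ∑ p ∈ univ.filter (fun p : Fin m × Fin m => p.1 = p.2), f p.1 * f p.2) := by
    rw [← Finset.sum_filter_add_sum_filter_not univ (fun p : Fin m × Fin m => p.1 < p.2),
      ← Finset.sum_filter_add_sum_filter_not (univ.filter (fun p : Fin m × Fin m => ¬ p.1 < p.2))
        (fun p : Fin m × Fin m => p.2 < p.1), Finset.filter_filter, Finset.filter_filter]
    congr 2
    · apply Finset.sum_congr _ (fun _ _ => rfl)
      apply Finset.filter_congr; intro p _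
      exact ⟨fun h => h.2, fun h => ⟨asymm h, h⟩⟩
    · apply Finset.sum_congr _ (fun _ _ => rfl)
      apply Finset.filter_congr; intro p _
      simp [not_lt, le_antisymm_iff, and_comm]
  have hswap : (∑ p ∈ univ.filter (fun p : Fin m × Fin m => p.2 < p.1), f p.1 * f p.2)
      = ∑ p ∈ univ.filter (fun p : Fin m × Fin m => p.1 < p.2), f p.1 * f p.2 := by
    apply Finset.sum_nbij' (fun p => Prod.swap p) (fun p => Prod.swap p) <;>
      simp [mul_comm]
  have hdiag : (∑ p ∈ univ.filter (fun p : Fin m × Fin m => p.1 = p.2), f p.1 * f p.2)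
      = ∑ i, f i ^ 2 := by
    rw [Finset.sum_filter]
    rw [Fintype.sum_prod_type]
    simp [Finset.sum_ite_eq', sq]
  rw [hsq, hsplit, hswap, hdiag]; ring


/-- Near-balance computation (Claim 1): if `n₁ + ⋯ + n_{r-1} = n` with `n_i ≥ 0` and
`a = max_i |n_i - n/(r-1)|` is achieved by `n₁`, then
`Σ_{i<j} n_i n_j ≤ n₁(n-n₁) + (1 - 1/(r-2))(n-n₁)²/2
  ≤ -(r-1)a²/(2(r-2)) + (r-2)n²/(2(r-1))`. -/
theorem near_balance (r : ℕ) (hr : 3 ≤ r) (f : Fin (r - 1) → ℝ) (hpos : ∀ i, 0 ≤ f i)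
    (n a : ℝ) (hsum : ∑ i, f i = n)
    (h0 : |f ⟨0, by omega⟩ - n / (r - 1)| = a)
    (hmax : ∀ i, |f i - n / (r - 1)| ≤ a) :
    (∑ p ∈ Finset.univ.filter (fun p : Fin (r - 1) × Fin (r - 1) => p.1 < p.2),
        f p.1 * f p.2 ≤
      f ⟨0, by omega⟩ * (n - f ⟨0, by omega⟩)
        + (1 - 1 / ((r : ℝ) - 2)) * (n - f ⟨0, by omega⟩) ^ 2 / 2) ∧
    f ⟨0, by omega⟩ * (n - f ⟨0, by omega⟩)
        + (1 - 1 / ((r : ℝ) - 2)) * (n - f ⟨0, by omega⟩) ^ 2 / 2 ≤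
      -((r : ℝ) - 1) * a ^ 2 / (2 * ((r : ℝ) - 2)) + ((r : ℝ) - 2) * n ^ 2 / (2 * ((r : ℝ) - 1)) := by
  set z : Fin (r - 1) := ⟨0, by omega⟩ with hz
  set c : ℝ := (r : ℝ) - 2 with hcdef
  set d : ℝ := (r : ℝ) - 1 with hddef
  have hr3 : (3:ℝ) ≤ (r:ℝ) := by exact_mod_cast hr
  have hc : 1 ≤ c := by rw [hcdef]; linarith
  have hd : 2 ≤ d := by rw [hddef]; linarith
  have hc0 : c ≠ 0 := by linarith
  have hd0 : d ≠ 0 := by linarith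
  constructor
  · -- first inequality
    have hid := pair_sum_id (r - 1) f
    have herase : f z + ∑ i ∈ univ.erase z, f i = n := by
      rw [Finset.add_sum_erase univ f (mem_univ z), hsum]
    have herase2 : f z ^ 2 + ∑ i ∈ univ.erase z, f i ^ 2 = ∑ i, f i ^ 2 := by
      rw [Finset.add_sum_erase univ (fun i => f i ^ 2) (mem_univ z)]
    have hcs := sq_sum_le_card_mul_sum_sq (s := univ.erase z) (f := f)
    have hcardn : (univ.erase z).card = r - 2 := by
      rw [Finset.card_erase_of_mem (mem_univ z), Finset.card_univ, Fintype.card_fin]; omega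
    have hcard : (((univ.erase z).card : ℕ) : ℝ) = c := by
      rw [hcardn, hcdef, Nat.cast_sub (by omega : 2 ≤ r)]; norm_num
    rw [hcard] at hcs
    have hfz : ∑ i ∈ univ.erase z, f i = n - f z := by linarith
    rw [hfz] at hcs
    have hT : (n - f z) ^ 2 / c ≤ ∑ i ∈ univ.erase z, f i ^ 2 := by
      rw [div_le_iff₀ (by linarith : (0:ℝ) < c)]
      linarith [hcs]
    have h2 : 2 * (∑ p ∈ Finset.univ.filter
        (fun p : Fin (r - 1) × Fin (r - 1) => p.1 < p.2), f p.1 * f p.2)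
        = n ^ 2 - f z ^ 2 - ∑ i ∈ univ.erase z, f i ^ 2 := by
      rw [hid, hsum, ← herase2]; ring
    have hring : n ^ 2 - f z ^ 2 = 2 * (f z * (n - f z)) + (n - f z) ^ 2 := by ring
    have expand : (1 - 1 / c) * (n - f z) ^ 2 / 2
        = (n - f z) ^ 2 / 2 - ((n - f z) ^ 2 / c) / 2 := by ring
    linarith [h2, hT, hring, expand]
  · -- second inequality (equality)
    have hb : (f z - n / d) ^ 2 = a ^ 2 := by
      rw [← h0, sq_abs]
    have hb' : (d * f z - n) ^ 2 = d ^ 2 * a ^ 2 := by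
      have h : (d * f z - n) ^ 2 = d ^ 2 * (f z - n / d) ^ 2 := by
        field_simp
      rw [h, hb]
    apply le_of_eq
    field_simp
    linear_combination (-1 : ℝ) * hb'
end
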